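/- arXiv:1401.0495 — 5 statements merged into one kernel-verified Lean document; each statement's English description precedes it below -/
import Mathlib

section
/- Let K be a field, F a subfield of K, and X, Y subsets of K such that trdeg(F(X)/F) and trdeg(F(Y)/F) are finite. Then trdeg(F(X ∪ Y)/F) + trdeg(F(X ∩ Y)/F) ≤ trdeg(F(X)/F) + trdeg(F(Y)/F). (Transcendence degree is submodular.) -/
noncomputable section

namespace TrdegAux

open IntermediateField

variable {F K : Type*} [Field F] [Field K] [Algebra F K]

/-- Algebraic closure operator for sets, relative to base field `F`. -/
def acl (F : Type*) [Field F] {K : Type*} [Field K] [Algebra F K] (s : Set K) : Set K :=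
  {x | IsAlgebraic (IntermediateField.adjoin F s) x}

theorem mem_acl {s : Set K} {x : K} :
    x ∈ acl F s ↔ IsAlgebraic (IntermediateField.adjoin F s) x := Iff.rfl

theorem isAlgebraic_adjoin_iff_aux (S : Set K) (x : K) :
    IsAlgebraic (Algebra.adjoin F S) x ↔ IsAlgebraic (IntermediateField.adjoin F S) x := by
  classical
  set A := Algebra.adjoin F S
  set L := IntermediateField.adjoin F S
  letI : Algebra A L :=
    (Subalgebra.inclusion (IntermediateField.algebra_adjoin_le_adjoin F S)).toRingHom.toAlgebra
  haveI : IsScalarTower A L K := IsScalarTower.of_algebraMap_eq (congrFun rfl)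
  haveI : IsFractionRing A L := by
    constructor
    constructor
    case map_units =>
      rintro ⟨y, hy⟩
      rw [isUnit_iff_ne_zero]
      intro h
      have : (y : K) = 0 := congrArg (algebraMap L K) h
      have hy0 : y = 0 := Subtype.ext this
      exact nonZeroDivisors.ne_zero hy hy0
    case surj =>
      intro z
      obtain ⟨r, s, hrs⟩ := (IntermediateField.mem_adjoin_iff F (z : K)).1 z.2
      have hr : MvPolynomial.aeval (Subtype.val : S → K) r ∈ A := by
        rw [show A = Algebra.adjoin F (Set.range (Subtype.val : S → K)) by
          rw [Subtype.range_coe], Algebra.adjoin_range_eq_range_aeval]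
        exact ⟨r, rfl⟩
      have hs : MvPolynomial.aeval (Subtype.val : S → K) s ∈ A := by
        rw [show A = Algebra.adjoin F (Set.range (Subtype.val : S → K)) by
          rw [Subtype.range_coe], Algebra.adjoin_range_eq_range_aeval]
        exact ⟨s, rfl⟩
      by_cases h0 : MvPolynomial.aeval (Subtype.val : S → K) s = 0
      · refine ⟨⟨0, 1⟩, ?_⟩
        have : (z : K) = 0 := by rw [hrs, h0, div_zero]
        have hz : z = 0 := Subtype.ext this
        simp [hz]
      · refine ⟨⟨⟨_, hr⟩, ⟨⟨_, hs⟩, mem_nonZeroDivisors_of_ne_zero ?_⟩⟩, ?_⟩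
        · intro h; apply h0; exact congrArg Subtype.val h
        · apply Subtype.ext
          show (z : K) * MvPolynomial.aeval (Subtype.val : S → K) s
            = MvPolynomial.aeval (Subtype.val : S → K) r
          rw [hrs]
          exact div_mul_cancel₀ _ h0
    case exists_of_eq =>
      intro a b h
      refine ⟨1, ?_⟩
      have : (a : K) = b := congrArg (algebraMap L K) h
      simp [Subtype.ext this]
  exact IsFractionRing.isAlgebraic_iff A L K

/-- Element-level tower-bottom. -/
theorem isAlgebraic_of_tower {M : IntermediateField F K} [Algebra.IsAlgebraic F M] {x : K}
    (h : IsAlgebraic M x) : IsAlgebraic F x := by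
  haveI : Algebra.IsIntegral F M := Algebra.isAlgebraic_iff_isIntegral.1 ‹_›
  exact isAlgebraic_iff_isIntegral.2 (isIntegral_trans x (isAlgebraic_iff_isIntegral.1 h))

theorem acl_mono {s u : Set K} (h : s ⊆ u) : acl F s ⊆ acl F (K := K) u := by
  intro x hx
  exact IsAlgebraic.tower_top_of_subalgebra_le
    (A := (IntermediateField.adjoin F s).toSubalgebra)
    (B := (IntermediateField.adjoin F u).toSubalgebra)
    (IntermediateField.adjoin.mono F _ _ h) hx

theorem subset_acl (s : Set K) : s ⊆ acl F (K := K) s := fun x hx =>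
  isAlgebraic_algebraMap (⟨x, IntermediateField.subset_adjoin F s hx⟩ : IntermediateField.adjoin F s)

theorem acl_trans {s u : Set K} (hsu : s ⊆ acl F u) : acl F s ⊆ acl F (K := K) u := by
  intro x hx
  set U := IntermediateField.adjoin F u
  set S' : IntermediateField U K := IntermediateField.adjoin U s with hS'
  haveI : Algebra.IsAlgebraic U S' :=
    IntermediateField.isAlgebraic_adjoin fun z hz => isAlgebraic_iff_isIntegral.1 (hsu hz)
  have hle : IntermediateField.adjoin F s ≤ IntermediateField.restrictScalars F S' := by
    rw [hS', IntermediateField.adjoin_adjoin_left]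
    exact IntermediateField.adjoin.mono F _ _ Set.subset_union_right
  have hx' : IsAlgebraic (IntermediateField.restrictScalars F S') x :=
    IsAlgebraic.tower_top_of_subalgebra_le
      (A := (IntermediateField.adjoin F s).toSubalgebra)
      (B := (IntermediateField.restrictScalars F S').toSubalgebra) hle hx
  have hx'' : IsAlgebraic S' x := hx'
  exact isAlgebraic_of_tower (F := U) hx''

theorem algIndep_insert_iff {s : Set K} {a : K}
    (hs : AlgebraicIndependent F ((↑) : s → K)) (ha : a ∉ s) :
    AlgebraicIndependent F ((↑) : ↥(insert a s) → K) ↔ a ∉ acl F s := by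
  classical
  have key : AlgebraicIndependent F (fun o : Option s => o.elim a (↑)) ↔
      AlgebraicIndependent F ((↑) : ↥(insert a s) → K) := by
    refine (algebraicIndependent_equiv' (R := F) (e := Set.subtypeInsertEquivOption ha)
      (f := fun o : Option s => o.elim a (↑)) (g := ((↑) : ↥(insert a s) → K)) ?_).symm
    ext x
    by_cases h : ↑x = a <;> simp [h, Set.subtypeInsertEquivOption]
  have hopt := hs.option_iff_transcendental a
  rw [Subtype.range_coe] at hopt
  rw [← key, hopt]
  unfold Transcendental
  rw [isAlgebraic_adjoin_iff_aux, mem_acl]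

theorem mem_acl_of_not_indep {s : Set K} {a : K}
    (hs : AlgebraicIndependent F ((↑) : s → K)) (ha : a ∉ s)
    (h : ¬ AlgebraicIndependent F ((↑) : ↥(insert a s) → K)) : a ∈ acl F s := by
  by_contra h'
  exact h ((algIndep_insert_iff hs ha).2 h')

theorem transcendental_of_indep_insert {s : Set K} {a : K}
    (h : AlgebraicIndependent F ((↑) : ↥(insert a s) → K)) (ha : a ∉ s) :
    a ∉ acl F s :=
  (algIndep_insert_iff (h.mono (Set.subset_insert a s)) ha).1 h

theorem acl_empty {x : K} (h : x ∈ acl F (∅ : Set K)) : IsAlgebraic F x := by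
  haveI : Algebra.IsAlgebraic F (IntermediateField.adjoin F (∅ : Set K)) :=
    IntermediateField.isAlgebraic_adjoin (by simp)
  exact isAlgebraic_of_tower h

theorem exchange {u : Set K} {a b : K} (hab : a ∈ acl F (insert b u)) (ha : a ∉ acl F u) :
    b ∈ acl F (insert a u) := by
  classical
  set L := IntermediateField.adjoin F u with hL
  have conv : ∀ c x : K, x ∈ acl F (insert c u) ↔
      IsAlgebraic (IntermediateField.adjoin L {c}) x := by
    intro c x
    have h : IntermediateField.adjoin F (insert c u) =
        IntermediateField.restrictScalars F (IntermediateField.adjoin L {c}) := by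
      rw [IntermediateField.adjoin_adjoin_left, Set.union_singleton]
    rw [mem_acl, h]
    exact Iff.rfl
  rw [conv] at hab ⊢
  have ha' : Transcendental L a := ha
  by_cases hb : IsAlgebraic L b
  · haveI : Algebra.IsAlgebraic L (IntermediateField.adjoin L {b}) :=
      IntermediateField.isAlgebraic_adjoin
        (by rintro x rfl; exact isAlgebraic_iff_isIntegral.1 hb)
    exact absurd (isAlgebraic_of_tower (F := L) hab) ha'
  · by_contra hba
    have h1 : AlgebraicIndependent L (fun _ : Unit => a) :=
      algebraicIndependent_unique_type_iff.2 ha'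
    have h2 : Transcendental (Algebra.adjoin L (Set.range fun _ : Unit => a)) b := by
      rw [Set.range_const]
      unfold Transcendental
      rw [isAlgebraic_adjoin_iff_aux]
      exact hba
    have h3 := (h1.option_iff_transcendental b).2 h2
    have h4 : AlgebraicIndependent L (fun o : Option Unit => o.elim a fun _ => b) := by
      refine (algebraicIndependent_equiv' (Equiv.swap none (some ())) ?_).1 h3
      ext o
      match o with
      | none => simp
      | some () => simp
    have h5 : AlgebraicIndependent L (fun _ : Unit => b) :=
      algebraicIndependent_unique_type_iff.2 hb
    have h6 := (h5.option_iff_transcendental a).1 ?_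
    · rw [Set.range_const] at h6
      unfold Transcendental at h6
      rw [isAlgebraic_adjoin_iff_aux] at h6
      exact h6 hab
    · refine (algebraicIndependent_equiv' (Equiv.refl _) ?_).1 h4
      ext o
      match o with
      | none => rfl
      | some () => rfl

/-- Replacement: an independent set inside the algebraic closure of a finite set is
no larger than that set. -/
theorem kb (n : ℕ) : ∀ s t : Set K, s.Finite → t.Finite → (t \ s).ncard = n →
    AlgebraicIndependent F ((↑) : t → K) → t ⊆ acl F s → t.ncard ≤ s.ncard := by
  induction n with
  | zero =>
    intro s t hs ht hd hi hsub
    have h0 : t \ s = ∅ := (Set.ncard_eq_zero (ht.diff (t := s))).1 hd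
    have hts : t ⊆ s := by rwa [Set.diff_eq_empty] at h0
    exact Set.ncard_le_ncard hts hs
  | succ n ih =>
    intro s t hs ht hd hi hsub
    classical
    have hne : (t \ s).Nonempty := Set.nonempty_of_ncard_ne_zero (by omega)
    obtain ⟨x, hxt, hxs⟩ := hne
    have hP : ∃ k, ∃ s' : Set K, s' ⊆ s ∧ x ∈ acl F s' ∧ s'.ncard = k :=
      ⟨s.ncard, s, Set.Subset.rfl, hsub hxt, rfl⟩
    obtain ⟨s₀, hs₀s, hxs₀, hs₀k⟩ := Nat.find_spec hP
    have hs₀fin : s₀.Finite := hs.subset hs₀s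
    have hmin : ∀ y ∈ s₀, x ∉ acl F (s₀ \ {y}) := by
      intro y hy hmem
      have hlt : (s₀ \ {y}).ncard < Nat.find hP := by
        rw [← hs₀k]
        exact Set.ncard_diff_singleton_lt_of_mem hy hs₀fin
      exact Nat.find_min hP hlt ⟨s₀ \ {y}, (Set.diff_subset).trans hs₀s, hmem, rfl⟩
    have hs₀ne : s₀.Nonempty := by
      rcases Set.eq_empty_or_nonempty s₀ with h | h
      · exact absurd (acl_empty (h ▸ hxs₀)) (hi.transcendental ⟨x, hxt⟩)
      · exact h
    have hnotsub : ¬ s₀ ⊆ t \ {x} := by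
      intro hsub'
      have hxns₀ : x ∉ s₀ := fun h => hxs (hs₀s h)
      have hins : insert x s₀ ⊆ t := by
        intro z hz
        rcases hz with rfl | hz
        · exact hxt
        · exact (hsub' hz).1
      exact (transcendental_of_indep_insert (hi.mono hins) hxns₀) hxs₀
    obtain ⟨y, hys₀, hynt⟩ := Set.not_subset.1 hnotsub
    have hyx : y ≠ x := fun h => hxs (hs₀s (h ▸ hys₀))
    have hyt : y ∉ t := fun h => hynt ⟨h, hyx⟩
    have hys : y ∈ s := hs₀s hys₀
    have hx1 : x ∈ acl F (insert y (s₀ \ {y})) := by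
      rwa [Set.insert_diff_singleton, Set.insert_eq_of_mem hys₀]
    have hyacl : y ∈ acl F (insert x (s₀ \ {y})) := exchange hx1 (hmin y hys₀)
    set s' := insert x (s \ {y}) with hs'
    have hs'fin : s'.Finite := (hs.diff (t := {y})).insert x
    have hsacl : s ⊆ acl F s' := by
      intro z hz
      by_cases hzy : z = y
      · subst hzy
        refine acl_mono ?_ hyacl
        intro w hw
        rcases hw with rfl | hw
        · exact Set.mem_insert _ _
        · exact Set.mem_insert_of_mem _ ⟨hs₀s hw.1, hw.2⟩
      · exact subset_acl _ (Set.mem_insert_of_mem _ ⟨hz, hzy⟩)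
    have htacl : t ⊆ acl F s' := fun z hz => acl_trans hsacl (hsub hz)
    have hdiff : t \ s' = (t \ s) \ {x} := by
      rw [hs']
      ext z
      have hzy : z ∈ t → z ≠ y := fun h hh => hyt (hh ▸ h)
      simp only [Set.mem_diff, Set.mem_insert_iff, Set.mem_singleton_iff]
      tauto
    have hdn : (t \ s').ncard = n := by
      have hxts : x ∈ t \ s := ⟨hxt, hxs⟩
      rw [hdiff, Set.ncard_diff_singleton_of_mem hxts]
      omega
    have h1 := ih s' t hs'fin ht hdn hi htacl
    have h2 : s'.ncard ≤ (s \ {y}).ncard + 1 := Set.ncard_insert_le _ _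
    have h3 : (s \ {y}).ncard = s.ncard - 1 := Set.ncard_diff_singleton_of_mem hys
    have h4 : 1 ≤ s.ncard := (Set.ncard_pos hs).2 ⟨y, hys⟩
    omega

end TrdegAux

/-- The transcendence degree of `F(X)` over `F`, for `F` a subfield of `K` and `X ⊆ K`:
the supremum of the cardinalities of subsets of `X` that are algebraically independent
over `F`. -/
def Subfield.trdegOver {K : Type*} [Field K] (F : Subfield K) (X : Set K) : Cardinal :=
  ⨆ t : {t : Set K // t ⊆ X ∧ AlgebraicIndependent F ((↑) : t → K)}, Cardinal.mk t.1

theorem Subfield.le_trdegOver {K : Type*} [Field K] {F : Subfield K} {X t : Set K}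
    (ht : t ⊆ X) (hi : AlgebraicIndependent F ((↑) : t → K)) :
    Cardinal.mk t ≤ F.trdegOver X :=
  le_ciSup (f := fun t : {t : Set K // t ⊆ X ∧ AlgebraicIndependent F ((↑) : t → K)} =>
    Cardinal.mk t.1) (Cardinal.bddAbove_range _) ⟨t, ht, hi⟩

theorem Subfield.trdegOver_le {K : Type*} [Field K] {F : Subfield K} {X : Set K} {c : Cardinal}
    (h : ∀ t, t ⊆ X → AlgebraicIndependent F ((↑) : t → K) → Cardinal.mk t ≤ c) :
    F.trdegOver X ≤ c := by
  haveI : Nonempty {t : Set K // t ⊆ X ∧ AlgebraicIndependent F ((↑) : t → K)} :=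
    ⟨⟨∅, Set.empty_subset _, algebraicIndependent_empty⟩⟩
  exact ciSup_le' fun t => h t.1 t.2.1 t.2.2

theorem TrdegAux.kb_card {F K : Type*} [Field F] [Field K] [Algebra F K] {s t : Set K}
    (hs : s.Finite) (hi : AlgebraicIndependent F ((↑) : t → K))
    (hsub : t ⊆ TrdegAux.acl F s) : Cardinal.mk t ≤ Cardinal.mk s := by
  have hbound : ∀ u : Set K, u ⊆ t → u.Finite → u.ncard ≤ s.ncard := fun u hu hufin =>
    TrdegAux.kb _ s u hs hufin rfl (hi.mono hu) fun z hz => hsub (hu hz)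
  have htfin : t.Finite := by
    by_contra hinf
    have hinf' : t.Infinite := hinf
    obtain ⟨u, hu, hufin, hucard⟩ := hinf'.exists_subset_ncard_eq (s.ncard + 1)
    have := hbound u hu hufin
    omega
  have h1 := hbound t Set.Subset.rfl htfin
  haveI := htfin.fintype
  haveI := hs.fintype
  rw [Cardinal.mk_fintype ↥t, Cardinal.mk_fintype ↥s]
  have e1 : t.ncard = Fintype.card ↥t := by rw [← Nat.card_coe_set_eq, Nat.card_eq_fintype_card]
  have e2 : s.ncard = Fintype.card ↥s := by rw [← Nat.card_coe_set_eq, Nat.card_eq_fintype_card]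
  rw [e1, e2] at h1
  exact_mod_cast h1

/-- Submodularity of transcendence degree: if `trdeg(F(X)/F)` and `trdeg(F(Y)/F)` are
finite, then `trdeg(F(X ∪ Y)/F) + trdeg(F(X ∩ Y)/F) ≤ trdeg(F(X)/F) + trdeg(F(Y)/F)`. -/
theorem trdeg_submodular {K : Type*} [Field K] (F : Subfield K) (X Y : Set K)
    (hX : F.trdegOver X < Cardinal.aleph0) (hY : F.trdegOver Y < Cardinal.aleph0) :
    F.trdegOver (X ∪ Y) + F.trdegOver (X ∩ Y) ≤ F.trdegOver X + F.trdegOver Y := by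
  classical
  have hfinX : ∀ t : Set K, t ⊆ X → AlgebraicIndependent F ((↑) : t → K) → t.Finite :=
    fun t ht hi => Cardinal.lt_aleph0_iff_set_finite.1
      ((Subfield.le_trdegOver ht hi).trans_lt hX)
  have hfinY : ∀ t : Set K, t ⊆ Y → AlgebraicIndependent F ((↑) : t → K) → t.Finite :=
    fun t ht hi => Cardinal.lt_aleph0_iff_set_finite.1
      ((Subfield.le_trdegOver ht hi).trans_lt hY)
  have hfinXY : ∀ t : Set K, t ⊆ X ∪ Y → AlgebraicIndependent F ((↑) : t → K) → t.Finite := by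
    intro t ht hi
    have : t = (t ∩ X) ∪ (t ∩ Y) := by
      ext z; constructor
      · intro hz
        rcases ht hz with h | h
        · exact Or.inl ⟨hz, h⟩
        · exact Or.inr ⟨hz, h⟩
      · rintro (⟨h, _⟩ | ⟨h, _⟩) <;> exact h
    rw [this]
    exact (hfinX _ Set.inter_subset_right (hi.mono Set.inter_subset_left)).union
      (hfinY _ Set.inter_subset_right (hi.mono Set.inter_subset_left))
  have hempty : AlgebraicIndependent F ((↑) : (∅ : Set K) → K) := algebraicIndependent_empty
  obtain ⟨B, hBB, hBmax⟩ := exists_maximal_algebraicIndependent (∅ : Set K) (X ∩ Y)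
    (Set.empty_subset _) hempty
  obtain ⟨B₁, hBB₁, hB₁max⟩ := exists_maximal_algebraicIndependent B X
    (hBmax.prop.2.trans Set.inter_subset_left) hBmax.prop.1
  obtain ⟨B₂, hB₁B₂, hB₂max⟩ := exists_maximal_algebraicIndependent B₁ (X ∪ Y)
    (hB₁max.prop.2.trans Set.subset_union_left) hB₁max.prop.1
  have hacl : ∀ {Z B' : Set K},
      Maximal (fun x : Set K => AlgebraicIndependent F ((↑) : x → K) ∧ x ⊆ Z) B' →
      Z ⊆ TrdegAux.acl F B' := by
    intro Z B' hmax z hz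
    by_cases hzB : z ∈ B'
    · exact TrdegAux.subset_acl _ hzB
    · refine TrdegAux.mem_acl_of_not_indep hmax.prop.1 hzB fun hind => ?_
      have hsub : insert z B' ⊆ B' :=
        hmax.2 ⟨hind, Set.insert_subset hz hmax.prop.2⟩ (Set.subset_insert _ _)
      exact hzB (hsub (Set.mem_insert _ _))
  have hBfin : B.Finite := hfinX B (hBmax.prop.2.trans Set.inter_subset_left) hBmax.prop.1
  have hB₁fin : B₁.Finite := hfinX B₁ hB₁max.prop.2 hB₁max.prop.1
  have hB₂fin : B₂.Finite := hfinXY B₂ hB₂max.prop.2 hB₂max.prop.1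
  -- the difference set
  set C := B₂ \ B₁ with hC
  have hCY : C ⊆ Y := by
    rintro z ⟨hzB₂, hzB₁⟩
    rcases hB₂max.prop.2 hzB₂ with hzX | hzY
    · exfalso
      have hins : insert z B₁ ⊆ B₂ := Set.insert_subset hzB₂ hB₁B₂
      have hind : AlgebraicIndependent F ((↑) : ↥(insert z B₁) → K) :=
        hB₂max.prop.1.mono hins
      have hsub : insert z B₁ ⊆ B₁ :=
        hB₁max.2 ⟨hind, Set.insert_subset hzX hB₁max.prop.2⟩ (Set.subset_insert _ _)
      exact hzB₁ (hsub (Set.mem_insert _ _))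
    · exact hzY
  have hBCY : B ∪ C ⊆ Y := Set.union_subset (hBmax.prop.2.trans Set.inter_subset_right) hCY
  have hBCind : AlgebraicIndependent F ((↑) : ↥(B ∪ C) → K) :=
    hB₂max.prop.1.mono (Set.union_subset (hBB₁.trans hB₁B₂) Set.diff_subset)
  -- inequalities
  have h1 : F.trdegOver (X ∪ Y) ≤ Cardinal.mk B₂ :=
    Subfield.trdegOver_le fun t ht hi =>
      TrdegAux.kb_card hB₂fin hi fun z hz => hacl hB₂max (ht hz)
  have h2 : F.trdegOver (X ∩ Y) ≤ Cardinal.mk B :=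
    Subfield.trdegOver_le fun t ht hi =>
      TrdegAux.kb_card hBfin hi fun z hz => hacl hBmax (ht hz)
  have h3 : Cardinal.mk B₁ ≤ F.trdegOver X := Subfield.le_trdegOver hB₁max.prop.2 hB₁max.prop.1
  have h4 : Cardinal.mk ↥(B ∪ C) ≤ F.trdegOver Y := Subfield.le_trdegOver hBCY hBCind
  have hB₂eq : Cardinal.mk B₂ = Cardinal.mk B₁ + Cardinal.mk C := by
    rw [← Cardinal.mk_union_of_disjoint (disjoint_sdiff_self_right (x := B₁) (y := B₂)),
      Set.union_diff_cancel hB₁B₂]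
  have hBCeq : Cardinal.mk ↥(B ∪ C) = Cardinal.mk B + Cardinal.mk C := by
    rw [Cardinal.mk_union_of_disjoint]
    exact Set.disjoint_of_subset_left hBB₁ disjoint_sdiff_self_right
  calc F.trdegOver (X ∪ Y) + F.trdegOver (X ∩ Y)
      ≤ Cardinal.mk B₂ + Cardinal.mk B := add_le_add h1 h2
    _ = Cardinal.mk B₁ + Cardinal.mk ↥(B ∪ C) := by
        rw [hB₂eq, hBCeq]; ring
    _ ≤ F.trdegOver X + F.trdegOver Y := add_le_add h3 h4

end
end

section
/- Let X and Y be finite-rank subgroups of K^×. Then δ(X·Y) + δ(X ∩ Y) ≤ δ(X) + δ(Y), where X·Y denotes the subgroup of K^× generated by X and Y. (The predimension δ is submodular.) -/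
noncomputable section

namespace GreenPoints

variable {K : Type*} [Field K] [CharZero K]

/-- The rank of a (multiplicative) subgroup of `Kˣ`: the ℤ-module rank of the
underlying abelian group, i.e. the dimension over ℚ of `S ⊗ ℚ`. -/
def grpRank (S : Subgroup Kˣ) : Cardinal := Module.rank ℤ (Additive S)

/-- A subgroup of `Kˣ` has finite rank. -/
def FiniteRank (S : Subgroup Kˣ) : Prop := grpRank S < Cardinal.aleph0

/-- The transcendence degree over ℚ of the subfield of `K` generated by a subset `s` of `K`:
the supremum of the cardinalities of subsets of `s` that are algebraically
independent over ℚ. -/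
def tdSet (s : Set K) : Cardinal :=
  ⨆ t : {t : Set K // t ⊆ s ∧ AlgebraicIndependent ℚ ((↑) : t → K)}, Cardinal.mk t.1

/-- The transcendence degree over ℚ of the subfield of `K` generated by a subgroup of `Kˣ`. -/
def td (S : Subgroup Kˣ) : Cardinal := tdSet (Units.val '' (S : Set Kˣ))

/-- The predimension `δ(S) = 2·td(S) − rk(S ∩ G)` (with respect to the subgroup `G`
of green points). -/
def delta (G S : Subgroup Kˣ) : ℤ :=
  2 * ((td S).toNat : ℤ) - ((grpRank (S ⊓ G)).toNat : ℤ)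

/-- `Y` is strong in `T` (with respect to `G`): `δ(W) ≥ δ(Y)` for every finite-rank
subgroup `W` with `Y ⊆ W ⊆ T`. -/
def StrongIn (G Y T : Subgroup Kˣ) : Prop :=
  ∀ W : Subgroup Kˣ, FiniteRank W → Y ≤ W → W ≤ T → delta G Y ≤ delta G W

/-- `Y` is strong: strong in `Kˣ`. -/
def Strong (G Y : Subgroup Kˣ) : Prop := StrongIn G Y ⊤

/-- A subgroup `S` of `Kˣ` is root-closed: `x ∈ S` whenever `x^n ∈ S` for some `n ≥ 1`. -/
def RootClosed (S : Subgroup Kˣ) : Prop :=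
  ∀ (x : Kˣ) (n : ℕ), 1 ≤ n → x ^ n ∈ S → x ∈ S

/-- The subfield of `K` generated by a subgroup of `Kˣ`. -/
def fieldOf (S : Subgroup Kˣ) : Subfield K := Subfield.closure (Units.val '' (S : Set Kˣ))


set_option linter.unusedSectionVars false
set_option linter.unusedVariables false
set_option maxHeartbeats 1600000
open Cardinal

/-! ## Part B: rank supermodularity via `ℤ`-submodules -/

/-- The subgroup `S` as a `ℤ`-submodule of `Additive Kˣ`. -/
def psi (S : Subgroup Kˣ) : Submodule ℤ (Additive Kˣ) :=
  AddSubgroup.toIntSubmodule (Subgroup.toAddSubgroup S)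

lemma psi_mono {S T : Subgroup Kˣ} (h : S ≤ T) : psi S ≤ psi T := by
  intro a ha
  exact h ha

lemma psi_sup (S T : Subgroup Kˣ) : psi (S ⊔ T) = psi S ⊔ psi T := by
  unfold psi
  rw [← map_sup, ← map_sup]

lemma psi_inf (S T : Subgroup Kˣ) : psi (S ⊓ T) = psi S ⊓ psi T := by
  unfold psi
  rw [← map_inf, ← map_inf]

def psiEquiv (S : Subgroup Kˣ) : Additive ↥S ≃+ ↥(psi S) where
  toFun a := ⟨Additive.ofMul (↑(Additive.toMul a) : Kˣ), (Additive.toMul a).2⟩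
  invFun b := Additive.ofMul (⟨Additive.toMul b.1, b.2⟩ : ↥S)
  left_inv a := rfl
  right_inv b := rfl
  map_add' a b := rfl

lemma grpRank_eq_rank_psi (S : Subgroup Kˣ) :
    grpRank S = Module.rank ℤ ↥(psi S) :=
  ((psiEquiv S).toIntLinearEquiv).rank_eq

lemma grpRank_mono {S T : Subgroup Kˣ} (h : S ≤ T) : grpRank S ≤ grpRank T := by
  rw [grpRank_eq_rank_psi, grpRank_eq_rank_psi]
  exact Submodule.rank_mono (psi_mono h)

lemma grpRank_sup_le (S T : Subgroup Kˣ) : grpRank (S ⊔ T) ≤ grpRank S + grpRank T := by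
  rw [grpRank_eq_rank_psi, grpRank_eq_rank_psi, grpRank_eq_rank_psi, psi_sup]
  rw [← Submodule.rank_sup_add_rank_inf_eq (psi S) (psi T)]
  exact self_le_add_right _ _

lemma grpRank_supermodular (A B : Subgroup Kˣ) :
    grpRank A + grpRank B ≤ grpRank (A ⊔ B) + grpRank (A ⊓ B) := by
  rw [grpRank_eq_rank_psi A, grpRank_eq_rank_psi B, grpRank_eq_rank_psi (A ⊔ B),
    grpRank_eq_rank_psi (A ⊓ B), psi_sup, psi_inf,
    ← Submodule.rank_sup_add_rank_inf_eq (psi A) (psi B)]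

/-- The key rank inequality for part (B). -/
lemma rank_part (G X Y : Subgroup Kˣ) :
    grpRank (X ⊓ G) + grpRank (Y ⊓ G) ≤
      grpRank ((X ⊔ Y) ⊓ G) + grpRank ((X ⊓ Y) ⊓ G) := by
  refine (grpRank_supermodular (X ⊓ G) (Y ⊓ G)).trans (add_le_add ?_ ?_)
  · exact grpRank_mono
      (sup_le (inf_le_inf_right G le_sup_left) (inf_le_inf_right G le_sup_right))
  · exact grpRank_mono (le_of_eq (by
      rw [inf_assoc, inf_comm G, inf_assoc, inf_idem, ← inf_assoc]))


/-! ## Part C: transcendence degree vs rank -/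

instance (s : Set K) : Nonempty {t : Set K // t ⊆ s ∧ AlgebraicIndependent ℚ ((↑) : t → K)} :=
  ⟨⟨∅, Set.empty_subset _, algebraicIndependent_empty⟩⟩

lemma le_tdSet {s t : Set K} (hts : t ⊆ s)
    (ht : AlgebraicIndependent ℚ ((↑) : t → K)) : #t ≤ tdSet s :=
  le_ciSup (Cardinal.bddAbove_range _) (⟨t, hts, ht⟩ :
    {t : Set K // t ⊆ s ∧ AlgebraicIndependent ℚ ((↑) : t → K)})

lemma tdSet_le {s : Set K} {c : Cardinal}
    (h : ∀ t : Set K, t ⊆ s → AlgebraicIndependent ℚ ((↑) : t → K) → #t ≤ c) :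
    tdSet s ≤ c :=
  ciSup_le' fun t => h t.1 t.2.1 t.2.2

lemma tdSet_mono {s s' : Set K} (h : s ⊆ s') : tdSet s ≤ tdSet s' :=
  tdSet_le fun t hts ht => le_tdSet (hts.trans h) ht

/-- Algebraically independent elements of a subgroup are multiplicatively independent,
hence transcendence degree is at most the group rank. -/
lemma td_le_grpRank (S : Subgroup Kˣ) : td S ≤ grpRank S := by
  refine tdSet_le fun t hts ht => ?_
  -- choose preimages in S
  have hch : ∀ x : t, ∃ u : S, ((u : Kˣ) : K) = (x : K) := by
    rintro ⟨x, hx⟩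
    obtain ⟨u, hu, rfl⟩ := hts hx
    exact ⟨⟨u, hu⟩, rfl⟩
  choose w hw using hch
  -- the family in Additive ↥S
  set v : t → Additive ↥S := fun x => Additive.ofMul (w x) with hv
  have hx0 : ∀ x : t, (x : K) ≠ 0 := by
    intro x
    rw [← hw x]
    exact Units.ne_zero _
  -- linear independence of monomial evaluations
  have hb := (MvPolynomial.basisMonomials t ℚ).linearIndependent
  have hker : LinearMap.ker (MvPolynomial.aeval (R := ℚ) ((↑) : t → K)).toLinearMap = ⊥ :=
    LinearMap.ker_eq_bot.2 ht
  have hmono := hb.map' _ hker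
  have hmono' : LinearIndependent ℚ
      (fun d : t →₀ ℕ => MvPolynomial.aeval (R := ℚ) ((↑) : t → K) (MvPolynomial.monomial d 1)) := by
    simpa [Function.comp_def] using hmono
  have hmono_inj := hmono'.injective
  -- linear independence of v
  have hli : LinearIndependent ℤ v := by
    rw [linearIndependent_iff']
    intro s g hrel i hi
    classical
    -- turn the additive relation into a multiplicative one
    have hrel' : (∏ j ∈ s, (w j : Kˣ) ^ (g j)) = 1 := by
      have := congrArg (fun a : Additive ↥S => ((Additive.toMul a : ↥S) : Kˣ)) hrel
      simp only [toMul_sum, toMul_zsmul] at this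
      simpa [hv] using this
    have hrelK : (∏ j ∈ s, ((j : t) : K) ^ (g j)) = 1 := by
      calc ∏ j ∈ s, ((j : t) : K) ^ (g j)
          = ∏ j ∈ s, (((w j : Kˣ) ^ (g j) : Kˣ) : K) := by
            refine Finset.prod_congr rfl fun j _ => ?_
            rw [Units.val_zpow_eq_zpow_val, hw]
        _ = ((∏ j ∈ s, ((w j : Kˣ) ^ (g j)) : Kˣ) : K) :=
            (map_prod (Units.coeHom K) _ s).symm
        _ = 1 := by rw [hrel', Units.val_one]
    -- split into nonnegative parts
    set p : t → ℕ := fun j => if j ∈ s then (g j).toNat else 0 with hp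
    set q : t → ℕ := fun j => if j ∈ s then (-(g j)).toNat else 0 with hq
    have hsplit : (∏ j ∈ s, ((j : t) : K) ^ (p j)) = ∏ j ∈ s, ((j : t) : K) ^ (q j) := by
      have key : ∀ j ∈ s, ((j : t) : K) ^ (g j)
          = ((j : t) : K) ^ (p j) * (((j : t) : K) ^ (q j))⁻¹ := by
        intro j hj
        have hg : g j = (p j : ℤ) - (q j : ℤ) := by simp only [hp, hq, if_pos hj]; omega
        rw [hg, zpow_sub₀ (hx0 j), zpow_natCast, zpow_natCast, div_eq_mul_inv]
      rw [Finset.prod_congr rfl key, Finset.prod_mul_distrib, Finset.prod_inv_distrib,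
        ← div_eq_mul_inv] at hrelK
      have hne : (∏ j ∈ s, (((j : t) : K) ^ (q j))) ≠ 0 :=
        Finset.prod_ne_zero_iff.2 fun j _ => pow_ne_zero _ (hx0 j)
      exact (div_eq_one_iff_eq hne).1 hrelK
    -- package as Finsupps
    have hpsupp : ∀ j : t, p j ≠ 0 → j ∈ s := by
      intro j hj; by_contra hns; simp [hp, hns] at hj
    have hqsupp : ∀ j : t, q j ≠ 0 → j ∈ s := by
      intro j hj; by_contra hns; simp [hq, hns] at hj
    set dp : t →₀ ℕ := Finsupp.onFinset s p hpsupp with hdp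
    set dq : t →₀ ℕ := Finsupp.onFinset s q hqsupp with hdq
    have hmval : ∀ (d : t →₀ ℕ), (∀ j : t, d j ≠ 0 → j ∈ s) →
        MvPolynomial.aeval (R := ℚ) ((↑) : t → K) (MvPolynomial.monomial d 1)
          = ∏ j ∈ s, ((j : t) : K) ^ (d j) := by
      intro d hd
      rw [MvPolynomial.aeval_monomial, map_one, one_mul]
      exact Finsupp.prod_of_support_subset d (fun j hj => hd j (Finsupp.mem_support_iff.1 hj))
        _ (fun j _ => pow_zero _)
    have heq : dp = dq := by
      apply hmono_inj
      dsimp only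
      rw [hmval dp (fun j hj => hpsupp j hj), hmval dq (fun j hj => hqsupp j hj)]
      simpa [hdp, hdq] using hsplit
    have : p i = q i := by
      have := congrFun (congrArg (fun f : t →₀ ℕ => (f : t → ℕ)) heq) i
      simpa [hdp, hdq] using this
    simp only [hp, hq, if_pos hi] at this
    omega
  have := hli.cardinal_lift_le_rank
  rw [Cardinal.lift_le] at this
  exact this


/-! ## Part D: exchange machinery -/

/-! ### Generic transfer lemmas -/

lemma aeval_map_eq {ι : Type*} {R S : Type*} [CommRing R] [CommRing S]
    [Algebra R K] [Algebra S K] (f : R →+* S)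
    (hf : ∀ r, algebraMap S K (f r) = algebraMap R K r) (v : ι → K) (p : MvPolynomial ι R) :
    MvPolynomial.aeval (R := S) v (MvPolynomial.map f p) = MvPolynomial.aeval (R := R) v p := by
  rw [MvPolynomial.aeval_def, MvPolynomial.aeval_def, MvPolynomial.eval₂_map,
    show (algebraMap S K).comp f = algebraMap R K from RingHom.ext hf]

lemma isAlgebraic_transfer {R S : Type*} [CommRing R] [CommRing S] [Algebra R K] [Algebra S K]
    (f : R →+* S) (hf : ∀ r, algebraMap S K (f r) = algebraMap R K r)
    (hinj : Function.Injective (algebraMap R K)) {x : K} (h : IsAlgebraic R x) :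
    IsAlgebraic S x := by
  obtain ⟨p, hp0, hpe⟩ := h
  have hfi : Function.Injective f := fun a b hab => hinj (by rw [← hf, hab, hf])
  refine ⟨p.map f, fun hc => hp0 ((Polynomial.map_eq_zero_iff hfi).1 hc), ?_⟩
  rw [Polynomial.aeval_def, Polynomial.eval₂_map,
    show (algebraMap S K).comp f = algebraMap R K from RingHom.ext hf]
  exact hpe

lemma algebraicIndependent_transfer_surj {ι : Type*} {R S : Type*} [CommRing R] [CommRing S]
    [Algebra R K] [Algebra S K] (f : R →+* S)
    (hf : ∀ r, algebraMap S K (f r) = algebraMap R K r)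
    (hsurj : Function.Surjective f) {v : ι → K} (h : AlgebraicIndependent R v) :
    AlgebraicIndependent S v := by
  rw [algebraicIndependent_iff]
  intro q hq
  obtain ⟨p, rfl⟩ := MvPolynomial.map_surjective f hsurj q
  rw [algebraicIndependent_iff] at h
  rw [h p (by rw [← aeval_map_eq f hf v p]; exact hq), map_zero]

/-! ### The field generated by a subset, and algebraic dependence over it -/

def Fd (A : Set K) : IntermediateField ℚ K := IntermediateField.adjoin ℚ A

lemma subset_Fd (A : Set K) : A ⊆ ↑(Fd A) := IntermediateField.subset_adjoin ℚ A

lemma Fd_le {A : Set K} {L : IntermediateField ℚ K} (h : A ⊆ ↑L) : Fd A ≤ L :=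
  IntermediateField.adjoin_le_iff.2 h

lemma Fd_mono {A B : Set K} (h : A ⊆ B) : Fd A ≤ Fd B := Fd_le (h.trans (subset_Fd B))

/-- `x` is algebraic over the subfield of `K` generated by `A` (over `ℚ`). -/
def AlgDep (A : Set K) (x : K) : Prop := IsAlgebraic ↥(Fd A) x

lemma AlgDep.mono {A B : Set K} {x : K} (h : A ⊆ B) (hx : AlgDep A x) : AlgDep B x := by
  refine isAlgebraic_transfer ((IntermediateField.inclusion (Fd_mono h)).toRingHom)
    (fun r => ?_) (algebraMap ↥(Fd A) K).injective hx
  rfl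

lemma algDep_of_mem {A : Set K} {x : K} (hx : x ∈ Fd A) : AlgDep A x := by
  exact isAlgebraic_algebraMap (⟨x, hx⟩ : ↥(Fd A))

lemma algDep_of_mem' {A : Set K} {x : K} (hx : x ∈ A) : AlgDep A x :=
  algDep_of_mem (subset_Fd A hx)

/-- membership transfer into a relative adjoin -/
lemma mem_adjoinL {L : IntermediateField ℚ K} {S : Set K} {z : K}
    (hz : z ∈ Fd (↑L ∪ S)) : z ∈ IntermediateField.adjoin ↥L S := by
  have hle : Fd (↑L ∪ S) ≤ IntermediateField.restrictScalars ℚ (IntermediateField.adjoin ↥L S) := by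
    refine Fd_le (Set.union_subset ?_ ?_)
    · intro a ha
      exact (IntermediateField.adjoin ↥L S).algebraMap_mem ⟨a, ha⟩
    · exact IntermediateField.subset_adjoin _ _
  exact hle hz

lemma adjoin_ring_subset_Fd {A S : Set K} {z : K}
    (hz : z ∈ Algebra.adjoin ↥(Fd A) S) : z ∈ Fd (A ∪ S) := by
  induction hz using Algebra.adjoin_induction with
  | mem a ha => exact subset_Fd _ (Set.mem_union_right _ ha)
  | algebraMap r => exact (Fd_mono Set.subset_union_left) r.2
  | add a b _ _ ha hb => exact add_mem ha hb
  | mul a b _ _ ha hb => exact mul_mem ha hb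

lemma algDep_of_ring {A S : Set K} {x : K}
    (h : IsAlgebraic ↥(Algebra.adjoin ↥(Fd A) S) x) : AlgDep (A ∪ S) x := by
  refine isAlgebraic_transfer
    ({ toFun := fun a => ⟨a.1, adjoin_ring_subset_Fd a.2⟩,
       map_one' := rfl, map_mul' := fun _ _ => rfl,
       map_zero' := rfl, map_add' := fun _ _ => rfl } :
        ↥(Algebra.adjoin ↥(Fd A) S) →+* ↥(Fd (A ∪ S)))
    (fun r => ?_) (fun a b hab => Subtype.ext hab) h
  rfl

lemma algebraic_ring_to_Fd {A : Set K} {x : K}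
    (h : IsAlgebraic ↥(Algebra.adjoin ℚ A) x) : AlgDep A x := by
  have hle : Algebra.adjoin ℚ A ≤ (Fd A).toSubalgebra := Algebra.adjoin_le (subset_Fd A)
  refine isAlgebraic_transfer
    ({ toFun := fun a => ⟨a.1, hle a.2⟩,
       map_one' := rfl, map_mul' := fun _ _ => rfl,
       map_zero' := rfl, map_add' := fun _ _ => rfl } :
        ↥(Algebra.adjoin ℚ A) →+* ↥(Fd A))
    (fun r => ?_) (fun a b hab => Subtype.ext hab) h
  rfl

/-! ### Transitivity of algebraic dependence -/

lemma AlgDep.trans {A B : Set K} {x : K} (hB : ∀ y ∈ B, AlgDep A y)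
    (hx : AlgDep (A ∪ B) x) : AlgDep A x := by
  set J := IntermediateField.adjoin ↥(Fd A) B with hJ
  have hmem : ∀ z : K, z ∈ Fd (A ∪ B) → z ∈ J := fun z hz => mem_adjoinL
    ((Fd_mono (Set.union_subset_union_left B (subset_Fd A))) hz)
  -- J is algebraic over Fd A
  haveI halgJ : Algebra.IsAlgebraic ↥(Fd A) ↥J :=
    IntermediateField.isAlgebraic_adjoin fun y hy => (hB y hy).isIntegral
  haveI : Algebra.IsIntegral ↥(Fd A) ↥J := halgJ.isIntegral
  have hxJ : IsAlgebraic ↥J x := by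
    refine isAlgebraic_transfer
      ({ toFun := fun a => ⟨a.1, hmem a.1 a.2⟩,
         map_one' := rfl, map_mul' := fun _ _ => rfl,
         map_zero' := rfl, map_add' := fun _ _ => rfl } :
          ↥(Fd (A ∪ B)) →+* ↥J)
      (fun r => ?_) (algebraMap ↥(Fd (A ∪ B)) K).injective hx
    rfl
  have : IsIntegral ↥(Fd A) x := isIntegral_trans x hxJ.isIntegral
  exact this.isAlgebraic

/-! ### Denominator clearing -/

lemma indep_of_ratios {ι : Type*} {R A : Type*} [CommRing R] [CommRing A]
    [Algebra R K] [Algebra A K] (hinjR : Function.Injective (algebraMap R K))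
    (hratio : ∀ z : R, ∃ a b : A, algebraMap A K b ≠ 0 ∧
      algebraMap R K z * algebraMap A K b = algebraMap A K a)
    {v : ι → K} (hA : AlgebraicIndependent A v) : AlgebraicIndependent R v := by
  rw [algebraicIndependent_iff]
  intro p hp
  classical
  choose num den hden hnd using hratio
  set supp := p.support with hsupp
  set d : K := ∏ m ∈ supp, algebraMap A K (den (MvPolynomial.coeff m p)) with hd
  have hdne : d ≠ 0 := Finset.prod_ne_zero_iff.2 fun m _ => hden _
  set c : (ι →₀ ℕ) → A := fun m => num (MvPolynomial.coeff m p) *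
      ∏ m' ∈ supp.erase m, den (MvPolynomial.coeff m' p) with hc
  have hcval : ∀ m ∈ supp, algebraMap A K (c m)
      = d * algebraMap R K (MvPolynomial.coeff m p) := by
    intro m hm
    rw [hc]
    simp only [map_mul, map_prod]
    rw [hd, ← Finset.mul_prod_erase _ _ hm]
    rw [mul_comm (algebraMap A K (den (MvPolynomial.coeff m p))) _, mul_assoc,
      mul_comm (algebraMap A K (den (MvPolynomial.coeff m p))) _, ← hnd]
    ring
  set q : MvPolynomial ι A := ∑ m ∈ supp, MvPolynomial.monomial m (c m) with hq
  have hqe : MvPolynomial.aeval v q = 0 := by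
    rw [hq, map_sum]
    have hterm : ∀ m ∈ supp, MvPolynomial.aeval v (MvPolynomial.monomial m (c m))
        = d * (algebraMap R K (MvPolynomial.coeff m p) * (m.prod fun i k => v i ^ k)) := by
      intro m hm
      rw [MvPolynomial.aeval_monomial, hcval m hm, mul_assoc]
    rw [Finset.sum_congr rfl hterm, ← Finset.mul_sum]
    have hpe : (∑ m ∈ supp, (algebraMap R K (MvPolynomial.coeff m p)
        * (m.prod fun i k => v i ^ k))) = MvPolynomial.aeval v p := by
      rw [MvPolynomial.aeval_def, MvPolynomial.eval₂_eq]
      rfl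
    rw [hpe, hp, mul_zero]
  have hq0 : q = 0 := (algebraicIndependent_iff.1 hA) q hqe
  have hcoeff : ∀ m ∈ supp, MvPolynomial.coeff m p = 0 := by
    intro m hm
    have hcm : MvPolynomial.coeff m q = c m := by
      rw [hq, MvPolynomial.coeff_sum]
      rw [Finset.sum_eq_single m (fun m' _ hne => by
        rw [MvPolynomial.coeff_monomial, if_neg hne]) (fun hns => absurd hm hns)]
      rw [MvPolynomial.coeff_monomial, if_pos rfl]
    have hc0 : c m = 0 := by rw [← hcm, hq0, MvPolynomial.coeff_zero]
    have h0 : (0 : K) = d * algebraMap R K (MvPolynomial.coeff m p) := by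
      rw [← hcval m hm, hc0, map_zero]
    rcases mul_eq_zero.1 h0.symm with h | h
    · exact absurd h hdne
    · exact hinjR (by simpa using h)
  ext m
  by_cases hm : m ∈ supp
  · simpa using hcoeff m hm
  · rw [hsupp] at hm
    simpa using MvPolynomial.notMem_support_iff.1 hm

/-- Every element of `Fd (A ∪ {α})` is a ratio of elements of the ring
`Algebra.adjoin (Fd A) {α}`. -/
lemma ratio_helper (A : Set K) (α : K) :
    ∀ z : ↥(Fd (A ∪ {α})), ∃ a b : ↥(Algebra.adjoin ↥(Fd A) ({α} : Set K)),
      algebraMap _ K b ≠ 0 ∧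
      algebraMap ↥(Fd (A ∪ {α})) K z * algebraMap _ K b = algebraMap _ K a := by
  intro z
  have hz : (z : K) ∈ IntermediateField.adjoin ↥(Fd A) ({α} : Set K) :=
    mem_adjoinL ((Fd_mono (Set.union_subset_union_left {α} (subset_Fd A))) z.2)
  rw [IntermediateField.mem_adjoin_simple_iff] at hz
  obtain ⟨r, s, hrs⟩ := hz
  by_cases hs : Polynomial.aeval α s = 0
  · refine ⟨0, 1, by simp, ?_⟩
    have : (z : K) = 0 := by rw [hrs, hs, div_zero]
    simp [this]
  · have hrmem : Polynomial.aeval α r ∈ Algebra.adjoin ↥(Fd A) ({α} : Set K) := by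
      rw [Algebra.adjoin_singleton_eq_range_aeval]
      exact ⟨r, rfl⟩
    have hsmem : Polynomial.aeval α s ∈ Algebra.adjoin ↥(Fd A) ({α} : Set K) := by
      rw [Algebra.adjoin_singleton_eq_range_aeval]
      exact ⟨s, rfl⟩
    refine ⟨⟨_, hrmem⟩, ⟨_, hsmem⟩, hs, ?_⟩
    show (z : K) * Polynomial.aeval α s = Polynomial.aeval α r
    rw [hrs, div_mul_cancel₀ _ hs]

lemma isAlgebraic_ring_of_AlgDep {A : Set K} {α x : K} (h : AlgDep (A ∪ {α}) x) :
    IsAlgebraic ↥(Algebra.adjoin ↥(Fd A) ({α} : Set K)) x := by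
  by_contra hcon
  have hx1 : AlgebraicIndependent ↥(Algebra.adjoin ↥(Fd A) ({α} : Set K))
      (fun _ : Unit => x) := algebraicIndependent_unique_type_iff.2 hcon
  have hx2 : AlgebraicIndependent ↥(Fd (A ∪ {α})) (fun _ : Unit => x) :=
    indep_of_ratios (algebraMap ↥(Fd (A ∪ {α})) K).injective (ratio_helper A α) hx1
  exact (algebraicIndependent_unique_type_iff.1 hx2) h

/-! ### Splitting a sum family -/

open MvPolynomial in
lemma core_sum {R : Type*} [CommRing R] [Nontrivial R] [Algebra R K] {ι κ : Type*}
    {u : ι → K} {v : κ → K} (h : AlgebraicIndependent R (Sum.elim v u)) :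
    AlgebraicIndependent ↥(Algebra.adjoin R (Set.range u)) v := by
  have hu : AlgebraicIndependent R u := by
    have := h.comp Sum.inr Sum.inr_injective
    rwa [Sum.elim_comp_inr] at this
  set A := Algebra.adjoin R (Set.range u) with hA
  set E := hu.aevalEquiv with hE
  set m1 : MvPolynomial κ ↥A →+* MvPolynomial κ (MvPolynomial ι R) :=
    MvPolynomial.map (E.symm.toRingEquiv.toRingHom) with hm1
  set m2 : MvPolynomial κ (MvPolynomial ι R) →+* MvPolynomial (κ ⊕ ι) R :=
    iterToSum R κ ι with hm2
  set m3 : MvPolynomial (κ ⊕ ι) R →+* K :=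
    (MvPolynomial.aeval (R := R) (Sum.elim v u)).toRingHom with hm3
  have iterToSum_C_eq : ∀ q : MvPolynomial ι R,
      iterToSum R κ ι (MvPolynomial.C q) = rename Sum.inr q := by
    intro q
    induction q using MvPolynomial.induction_on with
    | C r => rw [iterToSum_C_C, rename_C]
    | add p q hp hq => rw [map_add, map_add, hp, hq, map_add]
    | mul_X p i hp => rw [map_mul, map_mul, hp, iterToSum_C_X, map_mul, rename_X]
  have hcomp : m3.comp (m2.comp m1) = (MvPolynomial.aeval (R := ↥A) v).toRingHom := by
    apply MvPolynomial.ringHom_ext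
    · intro a
      simp only [RingHom.comp_apply, hm1, MvPolynomial.map_C]
      rw [hm2, iterToSum_C_eq, hm3]
      show MvPolynomial.aeval (Sum.elim v u) (rename Sum.inr (E.symm.toRingEquiv.toRingHom a)) = _
      rw [aeval_rename, Sum.elim_comp_inr]
      have : MvPolynomial.aeval u (E.symm a) = algebraMap ↥A K (E (E.symm a)) :=
        (hu.algebraMap_aevalEquiv (E.symm a)).symm
      rw [show (E.symm.toRingEquiv.toRingHom a) = E.symm a from rfl, this,
        E.apply_symm_apply]
      show _ = MvPolynomial.aeval v (MvPolynomial.C a)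
      rw [MvPolynomial.aeval_C]
    · intro i
      simp only [RingHom.comp_apply, hm1, MvPolynomial.map_X]
      rw [hm2, iterToSum_X, hm3]
      show MvPolynomial.aeval (Sum.elim v u) (X (Sum.inl i)) = MvPolynomial.aeval v (X i)
      rw [MvPolynomial.aeval_X, MvPolynomial.aeval_X, Sum.elim_inl]
  have hi1 : Function.Injective ⇑m1 :=
    MvPolynomial.map_injective _ (fun a b hab => E.symm.toRingEquiv.injective hab)
  have hi2 : Function.Injective ⇑m2 := by
    have hid : (sumRingEquiv R κ ι).toRingHom.comp (iterToSum R κ ι) = RingHom.id _ := by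
      apply MvPolynomial.ringHom_ext'
      · apply MvPolynomial.ringHom_ext
        · intro r; simp [iterToSum_C_C]
        · intro i; simp [iterToSum_C_X]
      · intro i; simp [iterToSum_X]
    exact Function.LeftInverse.injective (g := (sumRingEquiv R κ ι))
      (fun a => RingHom.congr_fun hid a)
  have hi3 : Function.Injective ⇑m3 := h
  have hinj : Function.Injective ⇑(m3.comp (m2.comp m1)) := by
    rw [RingHom.coe_comp, RingHom.coe_comp]
    exact (hi3.comp hi2).comp hi1
  show Function.Injective (MvPolynomial.aeval (R := ↥A) v)
  rw [show (⇑(MvPolynomial.aeval (R := ↥A) v) : MvPolynomial κ ↥A → K)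
      = ⇑((MvPolynomial.aeval (R := ↥A) v).toRingHom) from rfl, ← hcomp]
  exact hinj

/-- If `t` is algebraically independent over `Fd B` and `t₁ ∈ t`, then `t \ {t₁}` is
algebraically independent over `Fd (B ∪ {t₁})`. -/
lemma indep_erase {B : Set K} {t : Set K} (ht : AlgebraicIndependent ↥(Fd B) ((↑) : t → K))
    {t₁ : K} (ht₁ : t₁ ∈ t) :
    AlgebraicIndependent ↥(Fd (B ∪ {t₁})) ((↑) : ↥(t \ {t₁}) → K) := by
  classical
  -- build the sum family
  have hins : insert t₁ (t \ {t₁}) = t := by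
    rw [Set.insert_diff_singleton, Set.insert_eq_self.2 ht₁]
  have hsum : AlgebraicIndependent ↥(Fd B)
      (Sum.elim ((↑) : ↥(t \ {t₁}) → K) (fun _ : Unit => t₁)) := by
    have hnm : t₁ ∉ (t \ {t₁} : Set K) := by simp
    set e : (↥(t \ {t₁}) ⊕ Unit) ≃ ↥t :=
      ((Equiv.sumCongr (Equiv.refl _) (Equiv.punitEquivPUnit)).trans
        ((Equiv.Set.insert hnm).symm.trans (Equiv.setCongr hins)))
    have hcomp : (((↑) : ↥t → K) ∘ e)
        = Sum.elim ((↑) : ↥(t \ {t₁}) → K) (fun _ : Unit => t₁) := by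
      funext o
      rcases o with ⟨a, ha⟩ | ⟨⟩ <;> simp [e]
    rw [← hcomp]
    exact ht.comp e e.injective
  have hcore := core_sum hsum
  rw [Set.range_const] at hcore
  refine indep_of_ratios (algebraMap ↥(Fd (B ∪ {t₁})) K).injective
    (ratio_helper B t₁) hcore

/-! ### The exchange lemma -/

lemma exchange {A : Set K} {x y : K} (hxt : ¬ AlgDep A x) (hxa : AlgDep (A ∪ {y}) x) :
    AlgDep (A ∪ {x}) y := by
  by_contra hcon
  have hyring : Transcendental ↥(Algebra.adjoin ↥(Fd A)
      (Set.range (fun _ : Unit => x))) y := by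
    rw [Set.range_const]
    intro halg
    exact hcon (algDep_of_ring (A := A) (S := {x}) halg)
  have hw : AlgebraicIndependent ↥(Fd A) (fun _ : Unit => x) :=
    algebraicIndependent_unique_type_iff.2 hxt
  have hpair := (hw.option_iff_transcendental y).2 hyring
  have hz : AlgebraicIndependent ↥(Fd A) (fun _ : Unit => y) := by
    have := hpair.comp (fun _ : Unit => none) (Function.injective_of_subsingleton _)
    exact this
  have hswap : AlgebraicIndependent ↥(Fd A)
      (fun o : Option Unit => o.elim x (fun _ => y)) := by
    have he : (fun o : Option Unit => o.elim y (fun _ : Unit => x))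
        ∘ (Equiv.swap (none : Option Unit) (some ()))
        = (fun o : Option Unit => o.elim x (fun _ : Unit => y)) := by
      funext o
      rcases o with _ | ⟨⟩
      · simp [Equiv.swap_apply_left]
      · simp [Equiv.swap_apply_right]
    exact (algebraicIndependent_equiv' (Equiv.swap none (some ())) he).2 hpair
  have hxring := (hz.option_iff_transcendental x).1 hswap
  apply hxring
  have hra := isAlgebraic_ring_of_AlgDep (A := A) (α := y) hxa
  rwa [Set.range_const]

/-! ### The main induction -/

lemma exch_main : ∀ (m : ℕ) (B s t : Finset K), s.card = m →
    AlgebraicIndependent ↥(Fd (↑B : Set K)) ((↑) : ((↑t : Set K)) → K) →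
    (∀ x ∈ t, AlgDep ((↑B : Set K) ∪ ↑s) x) → t.card ≤ m := by
  intro m
  induction m with
  | zero =>
    intro B s t hs ht halg
    rcases Finset.eq_empty_or_nonempty t with rfl | ⟨t₁, ht₁⟩
    · simp
    · exfalso
      have htr : Transcendental ↥(Fd (↑B : Set K)) t₁ :=
        ht.transcendental (⟨t₁, by simpa using ht₁⟩ : ((↑t : Set K)))
      apply htr
      have := halg t₁ ht₁
      rwa [Finset.card_eq_zero.1 hs, Finset.coe_empty, Set.union_empty] at this
  | succ m ih =>
    intro B s t hs ht halg
    classical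
    rcases Finset.eq_empty_or_nonempty t with rfl | ⟨t₁, ht₁⟩
    · simp
    have htr : Transcendental ↥(Fd (↑B : Set K)) t₁ :=
      ht.transcendental (⟨t₁, by simpa using ht₁⟩ : ((↑t : Set K)))
    -- find a minimal subset of s over which t₁ is algebraic
    have hfne : (s.powerset.filter (fun s' : Finset K => AlgDep ((↑B : Set K) ∪ ↑s') t₁)).Nonempty := by
      refine ⟨s, ?_⟩
      rw [Finset.mem_filter, Finset.mem_powerset]
      exact ⟨subset_rfl, halg t₁ ht₁⟩
    obtain ⟨s', hs'mem, hs'min⟩ := Finset.exists_min_image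
      (s.powerset.filter (fun s' : Finset K => AlgDep ((↑B : Set K) ∪ ↑s') t₁)) Finset.card hfne
    rw [Finset.mem_filter, Finset.mem_powerset] at hs'mem
    obtain ⟨hs'sub, hs'dep⟩ := hs'mem
    have hs'ne : s'.Nonempty := by
      rcases Finset.eq_empty_or_nonempty s' with rfl | h
      · exfalso
        apply htr
        have h0 : AlgDep (↑B : Set K) t₁ := by simpa using hs'dep
        exact h0
      · exact h
    obtain ⟨y, hy⟩ := hs'ne
    have htrM : ¬ AlgDep ((↑B : Set K) ∪ ↑(s'.erase y)) t₁ := by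
      intro hdep
      have hmem : s'.erase y ∈ s.powerset.filter
          (fun s'' : Finset K => AlgDep ((↑B : Set K) ∪ ↑s'') t₁) := by
        rw [Finset.mem_filter, Finset.mem_powerset]
        exact ⟨(Finset.erase_subset _ _).trans hs'sub, hdep⟩
      have := hs'min _ hmem
      have hlt : (s'.erase y).card < s'.card := Finset.card_erase_lt_of_mem hy
      omega
    -- exchange
    have hyalg : AlgDep (((↑B : Set K) ∪ ↑(s'.erase y)) ∪ {t₁}) y := by
      apply exchange htrM
      have hset : ((↑B : Set K) ∪ ↑(s'.erase y)) ∪ {y} = (↑B : Set K) ∪ ↑s' := by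
        rw [Set.union_assoc, Set.union_singleton, ← Finset.coe_insert,
          Finset.insert_erase hy]
      rw [hset]
      exact hs'dep
    -- new independence
    have ht' : AlgebraicIndependent ↥(Fd (↑(insert t₁ B) : Set K))
        ((↑) : ((↑(t.erase t₁) : Set K)) → K) := by
      have h1 := indep_erase ht (show t₁ ∈ ((↑t : Set K)) by simpa using ht₁)
      rw [Set.union_singleton] at h1
      have hseteq : ((↑t : Set K) \ {t₁}) = (↑(t.erase t₁) : Set K) := by
        rw [Finset.coe_erase]
      have hbeq : (insert t₁ (↑B : Set K)) = (↑(insert t₁ B) : Set K) := by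
        rw [Finset.coe_insert]
      rw [hseteq, hbeq] at h1
      exact h1
    -- new algebraicity
    have halg' : ∀ x ∈ t.erase t₁,
        AlgDep ((↑(insert t₁ B) : Set K) ∪ ↑(s.erase y)) x := by
      intro x hx
      have hxt : x ∈ t := Finset.mem_of_mem_erase hx
      refine AlgDep.trans (B := {y}) ?_ ?_
      · intro z hz
        rw [Set.mem_singleton_iff] at hz
        rw [hz]
        refine hyalg.mono ?_
        refine Set.union_subset (Set.union_subset ?_ ?_) ?_
        · refine Set.subset_union_of_subset_left ?_ _
          rw [Finset.coe_insert]
          exact Set.subset_insert _ _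
        · refine Set.subset_union_of_subset_right ?_ _
          exact_mod_cast Finset.erase_subset_erase y hs'sub
        · refine Set.subset_union_of_subset_left ?_ _
          rw [Finset.coe_insert]
          intro w hw
          rw [Set.mem_singleton_iff] at hw
          rw [hw]
          exact Set.mem_insert _ _
      · refine (halg x hxt).mono ?_
        refine Set.union_subset ?_ ?_
        · refine Set.subset_union_of_subset_left (Set.subset_union_of_subset_left ?_ _) _
          rw [Finset.coe_insert]
          exact Set.subset_insert _ _
        · intro z hz
          rcases eq_or_ne z y with rfl | hzy
          · exact Set.mem_union_right _ rfl
          · refine Set.mem_union_left _ (Set.mem_union_right _ ?_)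
            rw [Finset.coe_erase]
            exact ⟨hz, hzy⟩
    have hcard : (s.erase y).card = m := by
      have : y ∈ s := hs'sub hy
      rw [Finset.card_erase_of_mem this, hs]
      rfl
    have := ih (insert t₁ B) (s.erase y) (t.erase t₁) hcard ht' halg'
    have htc : t.card = (t.erase t₁).card + 1 := by
      rw [Finset.card_erase_of_mem ht₁]
      have h1 : 1 ≤ t.card := Finset.card_pos.2 ⟨t₁, ht₁⟩
      omega
    omega

/-- Main cardinality bound: an algebraically independent finite set, each of whose
elements is algebraic over the field generated by `s`, has at most `|s|` elements. -/
lemma main_card (s t : Finset K) (ht : AlgebraicIndependent ℚ ((↑) : (↑t : Set K) → K))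
    (halg : ∀ x ∈ t, AlgDep (↑s : Set K) x) : t.card ≤ s.card := by
  have hbot : Fd ((↑(∅ : Finset K)) : Set K) = ⊥ := by
    rw [Finset.coe_empty]
    exact IntermediateField.adjoin_empty ℚ K
  have hsurj : Function.Surjective (algebraMap ℚ ↥(Fd ((↑(∅ : Finset K)) : Set K))) := by
    intro b
    have hb : (b : K) ∈ (⊥ : IntermediateField ℚ K) := by
      rw [← hbot]; exact b.2
    rw [IntermediateField.mem_bot] at hb
    obtain ⟨q, hq⟩ := hb
    refine ⟨q, ?_⟩
    apply Subtype.ext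
    rw [← hq]
    rfl
  refine exch_main s.card ∅ s t rfl ?_ (by simpa using halg)
  refine algebraicIndependent_transfer_surj (algebraMap ℚ _) (fun r => ?_) hsurj ht
  rw [← IsScalarTower.algebraMap_apply]

/-! ### Maximal independent subsets -/

lemma exists_maximal_in (c W : Set K) (hcW : c ⊆ W)
    (hc : AlgebraicIndependent ℚ ((↑) : c → K)) :
    ∃ e : Set K, c ⊆ e ∧ e ⊆ W ∧ AlgebraicIndependent ℚ ((↑) : e → K) ∧
      ∀ w ∈ W, AlgDep e w := by
  obtain ⟨u, hcu, hmax⟩ := exists_maximal_algebraicIndependent c W hcW hc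
  refine ⟨u, hcu, hmax.1.2, hmax.1.1, ?_⟩
  intro w hw
  have hring : IsAlgebraic ↥(Algebra.adjoin ℚ (Set.range ((↑) : u → K))) w := by
    by_contra hcon
    have hopt := (hmax.1.1.option_iff_transcendental w).2 hcon
    have hrng : Set.range (fun o : Option u => o.elim w ((↑) : u → K)) = insert w u := by
      ext z
      constructor
      · rintro ⟨o, rfl⟩
        rcases o with _ | ⟨a, ha⟩
        · exact Set.mem_insert _ _
        · exact Set.mem_insert_of_mem _ ha
      · rintro (rfl | hz)
        · exact ⟨none, rfl⟩
        · exact ⟨some ⟨z, hz⟩, rfl⟩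
    have hindep : AlgebraicIndependent ℚ ((↑) : ↥(insert w u) → K) := by
      have := hopt.coe_range
      rwa [show (Set.range fun o : Option u => o.elim w fun i => id (i : K)) = insert w u from hrng] at this
    have hle := hmax.2 (y := insert w u) ⟨hindep, Set.insert_subset hw hmax.1.2⟩
      (Set.subset_insert _ _)
    have hwu : w ∈ u := hle (Set.mem_insert _ _)
    apply hcon
    have : w ∈ Algebra.adjoin ℚ (Set.range ((↑) : u → K)) := by
      apply Algebra.subset_adjoin
      rw [Subtype.range_coe]
      exact hwu
    exact isAlgebraic_algebraMap (⟨w, this⟩ : ↥(Algebra.adjoin ℚ (Set.range ((↑) : u → K))))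
  have : IsAlgebraic ↥(Algebra.adjoin ℚ u) w := by
    rwa [Subtype.range_coe] at hring
  exact algebraic_ring_to_Fd this


/-! ## Part E: assembly -/

lemma tdSet_attained {s : Set K} (h : tdSet s < ℵ₀) :
    ∃ t : Finset K, ↑t ⊆ s ∧ AlgebraicIndependent ℚ ((↑) : (↑t : Set K) → K) ∧
      t.card = (tdSet s).toNat := by
  classical
  obtain ⟨n, hn⟩ := Cardinal.lt_aleph0.1 h
  have htn : (tdSet s).toNat = n := by rw [hn, Cardinal.toNat_natCast]
  rw [htn]
  by_contra hcon
  push_neg at hcon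
  -- every independent subset has at most n-1 elements
  have hne : n ≠ 0 → tdSet s ≤ (n - 1 : ℕ) := by
    intro hn0
    refine tdSet_le fun t hts ht => ?_
    have h1 : #t ≤ (n : Cardinal) := by rw [← hn]; exact le_tdSet hts ht
    have htf : t.Finite := by
      rw [← Cardinal.lt_aleph0_iff_set_finite]
      exact h1.trans_lt (Cardinal.nat_lt_aleph0 n)
    have hcard : #t = (htf.toFinset.card : Cardinal) := by
      refine Eq.trans ?_ (Cardinal.mk_coe_finset (s := htf.toFinset))
      exact Cardinal.mk_congr (Equiv.setCongr htf.coe_toFinset.symm)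
    have hsub : ↑htf.toFinset ⊆ s := by rwa [htf.coe_toFinset]
    have hind : AlgebraicIndependent ℚ ((↑) : (↑htf.toFinset : Set K) → K) := by
      have : (↑htf.toFinset : Set K) = t := htf.coe_toFinset
      rw [this]; exact ht
    have hneq := hcon htf.toFinset hsub hind
    have hle : htf.toFinset.card ≤ n := by
      have := h1
      rw [hcard] at this
      exact_mod_cast this
    have : htf.toFinset.card ≤ n - 1 := by omega
    rw [hcard]
    exact_mod_cast this
  rcases Nat.eq_zero_or_pos n with hn0 | hn0
  · -- n = 0 : empty set attains
    exact hcon ∅ (by simp) (by simpa using (algebraicIndependent_empty (A := K) (K := ℚ)))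
      (by simp [hn0])
  · have := hne (by omega)
    rw [hn] at this
    have : n ≤ n - 1 := by exact_mod_cast this
    omega

lemma td_nat_ge (S : Subgroup Kˣ) (hS : td S < ℵ₀) (t : Finset K)
    (hsub : ↑t ⊆ Units.val '' (S : Set Kˣ))
    (hind : AlgebraicIndependent ℚ ((↑) : (↑t : Set K) → K)) :
    t.card ≤ (td S).toNat := by
  have h1 : ((t.card : Cardinal)) ≤ td S :=
    le_trans (le_of_eq (Cardinal.mk_coe_finset (s := t)).symm) (le_tdSet hsub hind)
  have := Cardinal.toNat_le_toNat h1 hS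
  rwa [Cardinal.toNat_natCast] at this

lemma td_part (X Y : Subgroup Kˣ) (hXY : td (X ⊔ Y) < ℵ₀) (hXiY : td (X ⊓ Y) < ℵ₀)
    (hX : td X < ℵ₀) (hY : td Y < ℵ₀) :
    (td (X ⊔ Y)).toNat + (td (X ⊓ Y)).toNat ≤ (td X).toNat + (td Y).toNat := by
  classical
  set WX : Set K := Units.val '' (X : Set Kˣ) with hWX
  set WY : Set K := Units.val '' (Y : Set Kˣ) with hWY
  obtain ⟨c, hcsub, hcind, hccard⟩ := tdSet_attained (s := Units.val '' ((X ⊓ Y : Subgroup Kˣ) : Set Kˣ)) hXiY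
  have hcX : (↑c : Set K) ⊆ WX :=
    hcsub.trans (Set.image_mono (by exact_mod_cast inf_le_left))
  have hcY : (↑c : Set K) ⊆ WY :=
    hcsub.trans (Set.image_mono (by exact_mod_cast inf_le_right))
  obtain ⟨e, hce, heX, heind, hemax⟩ := exists_maximal_in ↑c WX hcX hcind
  obtain ⟨f, hcf, hfY, hfind, hfmax⟩ := exists_maximal_in ↑c WY hcY hcind
  have heF : e.Finite := by
    rw [← Cardinal.lt_aleph0_iff_set_finite]
    exact (le_tdSet heX heind).trans_lt hX
  have hfF : f.Finite := by
    rw [← Cardinal.lt_aleph0_iff_set_finite]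
    exact (le_tdSet hfY hfind).trans_lt hY
  set eF := heF.toFinset with heFdef
  set fF := hfF.toFinset with hfFdef
  obtain ⟨d, hdsub, hdind, hdcard⟩ := tdSet_attained (s := Units.val '' ((X ⊔ Y : Subgroup Kˣ) : Set Kˣ)) hXY
  -- every element of d is algebraic over e ∪ f
  have halgd : ∀ x ∈ d, AlgDep (↑(eF ∪ fF) : Set K) x := by
    intro x hx
    obtain ⟨u, hu, rfl⟩ := hdsub hx
    rw [SetLike.mem_coe, Subgroup.mem_sup] at hu
    obtain ⟨g, hg, h, hh, rfl⟩ := hu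
    have hcoe : (↑(eF ∪ fF) : Set K) = e ∪ f := by
      rw [Finset.coe_union, heF.coe_toFinset, hfF.coe_toFinset]
    rw [hcoe]
    have hga : AlgDep (e ∪ f) (Units.val g) :=
      AlgDep.mono Set.subset_union_left (hemax _ (Set.mem_image_of_mem _ hg))
    have hha : AlgDep (e ∪ f) (Units.val h) :=
      AlgDep.mono Set.subset_union_right (hfmax _ (Set.mem_image_of_mem _ hh))
    have : IsAlgebraic ↥(Fd (e ∪ f)) (Units.val g * Units.val h) :=
      (hga.isIntegral.mul hha.isIntegral).isAlgebraic
    rwa [← Units.val_mul] at this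
  have hkey : d.card ≤ (eF ∪ fF).card := main_card (eF ∪ fF) d hdind halgd
  -- c is contained in eF ∩ fF
  have hcef : c ⊆ eF ∩ fF := by
    intro z hz
    rw [Finset.mem_inter, heFdef, hfFdef, Set.Finite.mem_toFinset, Set.Finite.mem_toFinset]
    exact ⟨hce hz, hcf hz⟩
  have hc_le : c.card ≤ (eF ∩ fF).card := Finset.card_le_card hcef
  have hunion : (eF ∪ fF).card + (eF ∩ fF).card = eF.card + fF.card :=
    Finset.card_union_add_card_inter _ _
  have heX' : eF.card ≤ (td X).toNat := by
    refine td_nat_ge X hX eF ?_ ?_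
    · rwa [heF.coe_toFinset]
    · have : (↑eF : Set K) = e := heF.coe_toFinset
      rw [this]; exact heind
  have hfY' : fF.card ≤ (td Y).toNat := by
    refine td_nat_ge Y hY fF ?_ ?_
    · rwa [hfF.coe_toFinset]
    · have : (↑fF : Set K) = f := hfF.coe_toFinset
      rw [this]; exact hfind
  have h1 : (td (X ⊔ Y)).toNat = d.card := hdcard.symm
  have h2 : (td (X ⊓ Y)).toNat = c.card := hccard.symm
  omega


theorem delta_submodular' (G X Y : Subgroup Kˣ)
    (hX : FiniteRank X) (hY : FiniteRank Y) :
    delta G (X ⊔ Y) + delta G (X ⊓ Y) ≤ delta G X + delta G Y := by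
  have hgXY : grpRank (X ⊔ Y) < ℵ₀ :=
    (grpRank_sup_le X Y).trans_lt (Cardinal.add_lt_aleph0 hX hY)
  have hgXiY : grpRank (X ⊓ Y) < ℵ₀ := (grpRank_mono inf_le_left).trans_lt hX
  have htXY : td (X ⊔ Y) < ℵ₀ := (td_le_grpRank _).trans_lt hgXY
  have htXiY : td (X ⊓ Y) < ℵ₀ := (td_le_grpRank _).trans_lt hgXiY
  have htX : td X < ℵ₀ := (td_le_grpRank _).trans_lt hX
  have htY : td Y < ℵ₀ := (td_le_grpRank _).trans_lt hY
  have htd := td_part X Y htXY htXiY htX htY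
  have hr1 : grpRank ((X ⊔ Y) ⊓ G) < ℵ₀ := (grpRank_mono inf_le_left).trans_lt hgXY
  have hr2 : grpRank ((X ⊓ Y) ⊓ G) < ℵ₀ := (grpRank_mono inf_le_left).trans_lt hgXiY
  have hr3 : grpRank (X ⊓ G) < ℵ₀ := (grpRank_mono inf_le_left).trans_lt hX
  have hr4 : grpRank (Y ⊓ G) < ℵ₀ := (grpRank_mono inf_le_left).trans_lt hY
  have hrk := rank_part G X Y
  have hrkn : (grpRank (X ⊓ G)).toNat + (grpRank (Y ⊓ G)).toNat ≤
      (grpRank ((X ⊔ Y) ⊓ G)).toNat + (grpRank ((X ⊓ Y) ⊓ G)).toNat := by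
    have := Cardinal.toNat_le_toNat hrk (Cardinal.add_lt_aleph0 hr1 hr2)
    rwa [Cardinal.toNat_add hr3 hr4, Cardinal.toNat_add hr1 hr2] at this
  unfold delta
  omega

/-- Submodularity of the predimension `δ`: for finite-rank subgroups `X, Y` of `Kˣ`,
`δ(X·Y) + δ(X ∩ Y) ≤ δ(X) + δ(Y)`, where `X·Y = X ⊔ Y` is the subgroup generated by
`X` and `Y`. -/
theorem delta_submodular {K : Type*} [Field K] [CharZero K] (G X Y : Subgroup Kˣ)
    (hX : FiniteRank X) (hY : FiniteRank Y) :
    delta G (X ⊔ Y) + delta G (X ⊓ Y) ≤ delta G X + delta G Y := by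
  exact delta_submodular' G X Y hX hY

end GreenPoints

end
end

section
/- Let K be a field, F a subfield of K, c ∈ F with c ≠ 0, and let b ∈ K be transcendental over F (so b ≠ 0 and c − b ≠ 0). Then for every pair of integers (m₁, m₂) ≠ (0, 0), the element b^{m₁}·(c − b)^{m₂} of K^× is transcendental over F. (The subvariety of (K^×)² defined by x + y = c is free of multiplicative dependences; together with its dimension being 1, this makes it rotund.) -/
noncomputable section

/-- The transcendence degree over a subfield `F` of `K` of the subfield `F(s)` generated by
`F` and a subset `s` of `K`: the supremum of the cardinalities of subsets of `s` that are
algebraically independent over `F`. -/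
def trdegOver {K : Type*} [Field K] (F : Subfield K) (s : Set K) : Cardinal :=
  ⨆ t : {t : Set K // t ⊆ s ∧ AlgebraicIndependent F ((↑) : t → K)}, Cardinal.mk t.1

/-- The subfield `F(s)` of `K` generated by a subfield `F` and a subset `s` of `K`. -/
def Subfield.adjoinSet {K : Type*} [Field K] (F : Subfield K) (s : Set K) : Subfield K :=
  Subfield.closure ((F : Set K) ∪ s)

open Polynomial IntermediateField

-- helper: root multiplicities of X^n * (c - X)^m at 0 and c, for c ≠ 0
lemma rm_aux {E : Type*} [Field E] {c : E} (hc : c ≠ 0) (n m : ℕ) :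
    rootMultiplicity (0 : E) (X ^ n * (C c - X) ^ m) = n ∧
    rootMultiplicity c (X ^ n * (C c - X) ^ m) = m := by
  have hX : (X : E[X]) ^ n ≠ 0 := pow_ne_zero _ X_ne_zero
  have hcX : (C c - X : E[X]) ≠ 0 := fun h => by
    have := congrArg (eval 0) h; simp at this; exact hc this
  have hcXp : (C c - X : E[X]) ^ m ≠ 0 := pow_ne_zero _ hcX
  have hne : (X : E[X]) ^ n * (C c - X) ^ m ≠ 0 := mul_ne_zero hX hcXp
  have hsign : (C c - X : E[X]) ^ m = C ((-1) ^ m) * (X - C c) ^ m := by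
    rw [← neg_sub (X : E[X]) (C c), neg_pow, C_pow, C_neg, C_1]
  constructor
  · rw [rootMultiplicity_mul hne]
    have h1 : rootMultiplicity (0 : E) ((X : E[X]) ^ n) = n := by
      have := rootMultiplicity_X_sub_C_pow (0 : E) n
      simpa using this
    have h2 : rootMultiplicity (0 : E) ((C c - X : E[X]) ^ m) = 0 := by
      apply rootMultiplicity_eq_zero
      simp [IsRoot, hc]
    rw [h1, h2, add_zero]
  · rw [rootMultiplicity_mul hne]
    have h1 : rootMultiplicity c ((X : E[X]) ^ n) = 0 := by
      apply rootMultiplicity_eq_zero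
      simp [IsRoot, hc]
    have h2 : rootMultiplicity c ((C c - X : E[X]) ^ m) = m := by
      rw [hsign, rootMultiplicity_mul (by rw [← hsign]; exact hcXp),
        rootMultiplicity_C, rootMultiplicity_X_sub_C_pow, zero_add]
    rw [h1, h2, zero_add]

set_option maxHeartbeats 1000000 in
set_option synthInstance.maxHeartbeats 200000 in
/-- The subvariety of `(K^×)²` defined by `x + y = c` is free of multiplicative dependences:
if `c ∈ F` is nonzero and `b` is transcendental over `F`, then for every pair of integers
`(m₁, m₂) ≠ (0, 0)`, the element `b^{m₁}·(c − b)^{m₂}` is transcendental over `F`. -/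
theorem transcendental_pow_mul_pow {K : Type*} [Field K] (F : Subfield K)
    (c : K) (hcF : c ∈ F) (hc : c ≠ 0) (b : K) (hb : Transcendental F b) :
    ∀ m₁ m₂ : ℤ, (m₁, m₂) ≠ (0, 0) →
      Transcendental F (b ^ m₁ * (c - b) ^ m₂) := by
  intro m₁ m₂ hm hy
  have hb0 : b ≠ 0 := by rintro rfl; exact hb isAlgebraic_zero
  have hcb : c - b ≠ 0 := by
    intro h
    have hbc : b = c := by linear_combination -h
    exact hb (hbc ▸ isAlgebraic_algebraMap (⟨c, hcF⟩ : F))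
  set y : K := b ^ m₁ * (c - b) ^ m₂ with hy_def
  have hy0 : y ≠ 0 := mul_ne_zero (zpow_ne_zero _ hb0) (zpow_ne_zero _ hcb)
  set n₁ := m₁.toNat with hn₁; set k₁ := (-m₁).toNat with hk₁
  set n₂ := m₂.toNat with hn₂; set k₂ := (-m₂).toNat with hk₂
  have key : ∀ x : K, x ≠ 0 → ∀ m : ℤ, x ^ m * x ^ (-m).toNat = x ^ m.toNat := by
    intro x hx m
    rw [← zpow_natCast x (-m).toNat, ← zpow_natCast x m.toNat, ← zpow_add₀ hx]
    congr 1; omega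
  have hkey : b ^ n₁ * (c - b) ^ n₂ = y * (b ^ k₁ * (c - b) ^ k₂) := by
    calc b ^ n₁ * (c - b) ^ n₂ = (b ^ m₁ * b ^ k₁) * ((c - b) ^ m₂ * (c - b) ^ k₂) := by
          rw [key b hb0 m₁, key (c - b) hcb m₂]
      _ = y * (b ^ k₁ * (c - b) ^ k₂) := by rw [hy_def]; ring
  -- the intermediate field F(y)
  set E : IntermediateField F K := F⟮y⟯ with hE
  have hcE : c ∈ E := E.algebraMap_mem (⟨c, hcF⟩ : F)
  have hyE : y ∈ E := mem_adjoin_simple_self F y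
  set cE : E := ⟨c, hcE⟩
  set yE : E := ⟨y, hyE⟩
  have hcE0 : cE ≠ 0 := Subtype.coe_ne_coe.mp hc
  have hyE0 : yE ≠ 0 := Subtype.coe_ne_coe.mp hy0
  -- the polynomial
  set P : E[X] := X ^ n₁ * (C cE - X) ^ n₂ - C yE * (X ^ k₁ * (C cE - X) ^ k₂) with hP
  have hPb : aeval b P = 0 := by
    have hac : algebraMap E K cE = c := rfl
    have hay : algebraMap E K yE = y := rfl
    simp only [hP, map_sub, map_mul, map_pow, aeval_X, aeval_C, hac, hay]
    linear_combination hkey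
  have hP0 : P ≠ 0 := by
    intro h
    have heq : X ^ n₁ * (C cE - X) ^ n₂ = C yE * (X ^ k₁ * (C cE - X) ^ k₂) :=
      sub_eq_zero.mp (hP ▸ h)
    have hQne : (X : E[X]) ^ k₁ * (C cE - X) ^ k₂ ≠ 0 := by
      apply mul_ne_zero (pow_ne_zero _ X_ne_zero) (pow_ne_zero _ ?_)
      intro h'
      have := congrArg (eval 0) h'; simp at this; exact hcE0 this
    have hRne : C yE * ((X : E[X]) ^ k₁ * (C cE - X) ^ k₂) ≠ 0 :=
      mul_ne_zero (by simpa using hyE0) hQne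
    have h1 : m₁ = 0 := by
      have l := (rm_aux hcE0 n₁ n₂).1
      have r : rootMultiplicity (0 : E) (C yE * (X ^ k₁ * (C cE - X) ^ k₂)) = k₁ := by
        rw [rootMultiplicity_mul hRne, rootMultiplicity_C, zero_add, (rm_aux hcE0 k₁ k₂).1]
      rw [heq, r] at l
      omega
    have h2 : m₂ = 0 := by
      have l := (rm_aux hcE0 n₁ n₂).2
      have r : rootMultiplicity cE (C yE * (X ^ k₁ * (C cE - X) ^ k₂)) = k₂ := by
        rw [rootMultiplicity_mul hRne, rootMultiplicity_C, zero_add, (rm_aux hcE0 k₁ k₂).2]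
      rw [heq, r] at l
      omega
    exact hm (by rw [h1, h2])
  -- b is algebraic over E, E is algebraic over F, hence b algebraic over F
  have hbE : IsAlgebraic E b := ⟨P, hP0, hPb⟩
  have : Algebra.IsAlgebraic F E := isAlgebraic_adjoin_simple (isAlgebraic_iff_isIntegral.mp hy)
  have : Algebra.IsIntegral F E := Algebra.isAlgebraic_iff_isIntegral.mp this
  have : IsIntegral F b := isIntegral_trans b (isAlgebraic_iff_isIntegral.mp hbE)
  exact hb this.isAlgebraic


end
end

section
/- Let K be an algebraically closed field of characteristic zero, F a subfield of K, n ≥ 1, and let b, b′ ∈ (K^×)^n, positive integers m₁, …, m_n, and elements d₁, …, d_n ∈ K^× each algebraic over F be such that (b′_i)^{m_i}·d_i = b_i for each i = 1, …, n. If for every k×n integer matrix M of rank k (1 ≤ k ≤ n) one has 2·trdeg(b^M/F) ≥ k, then for every k×n integer matrix M of rank k (1 ≤ k ≤ n) one has 2·trdeg((b′)^M/F) ≥ k. (Rotundity is preserved under coordinatewise extraction of roots and translation by algebraic elements.) -/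
set_option maxHeartbeats 1000000
set_option synthInstance.maxHeartbeats 400000

noncomputable section

namespace Rot
open scoped Classical
variable {K : Type*} [Field K]

theorem adjoinSet_eq_sup (F : Subfield K) (s : Set K) :
    F.adjoinSet s = F ⊔ Subfield.closure s := by
  rw [Subfield.adjoinSet, Subfield.closure_union, Subfield.closure_eq]

theorem le_adjoinSet (F : Subfield K) (s : Set K) : F ≤ F.adjoinSet s := by
  rw [adjoinSet_eq_sup]; exact le_sup_left

theorem subset_adjoinSet (F : Subfield K) (s : Set K) : s ⊆ F.adjoinSet s :=
  fun x hx => Subfield.subset_closure (Set.mem_union_right _ hx)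

theorem adjoinSet_le {F E : Subfield K} {s : Set K} (hF : F ≤ E) (hs : s ⊆ E) :
    F.adjoinSet s ≤ E := by
  rw [Subfield.adjoinSet, Subfield.closure_le]
  exact Set.union_subset hF hs

theorem adjoinSet_mono_set (F : Subfield K) {s t : Set K} (h : s ⊆ t) :
    F.adjoinSet s ≤ F.adjoinSet t :=
  adjoinSet_le (le_adjoinSet _ _) (h.trans (subset_adjoinSet _ _))

theorem adjoinSet_mono_base {F E : Subfield K} (h : F ≤ E) (s : Set K) :
    F.adjoinSet s ≤ E.adjoinSet s :=
  adjoinSet_le (h.trans (le_adjoinSet _ _)) (subset_adjoinSet _ _)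

theorem adjoinSet_adjoinSet (F : Subfield K) (s t : Set K) :
    (F.adjoinSet s).adjoinSet t = F.adjoinSet (s ∪ t) := by
  rw [adjoinSet_eq_sup, adjoinSet_eq_sup, adjoinSet_eq_sup, Subfield.closure_union, sup_assoc]

theorem adjoinSet_empty (F : Subfield K) : F.adjoinSet ∅ = F := by
  rw [adjoinSet_eq_sup]
  simp [Subfield.closure_empty]

theorem adjoinSet_congr (F : Subfield K) {s t : Set K} (h : s = t) :
    F.adjoinSet s = F.adjoinSet t := by rw [h]

/-- Transfer of algebraicity along a ring hom commuting with the algebra maps to `K`. -/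
theorem isAlgebraic_of_ringHom {R S : Type*} [CommRing R] [CommRing S] [Algebra R K]
    [Algebra S K] (f : R →+* S) (hf : ∀ r, algebraMap S K (f r) = algebraMap R K r)
    (hinj : Function.Injective (algebraMap R K)) {x : K} (h : IsAlgebraic R x) :
    IsAlgebraic S x := by
  obtain ⟨p, hp0, hpev⟩ := h
  have hfinj : Function.Injective f := fun a b hab => hinj (by rw [← hf, ← hf, hab])
  refine ⟨p.map f, ?_, ?_⟩
  · exact (Polynomial.map_ne_zero_iff hfinj).mpr hp0
  · rw [Polynomial.aeval_def, Polynomial.eval₂_map]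
    rw [Polynomial.aeval_def] at hpev
    convert hpev using 2
    exact RingHom.ext hf

theorem isAlg_mono {E E' : Subfield K} (h : E ≤ E') {x : K} (hx : IsAlgebraic E x) :
    IsAlgebraic E' x :=
  isAlgebraic_of_ringHom (K := K) (Subfield.inclusion h) (fun _ => rfl) (Subtype.val_injective) hx

theorem isAlg_self (E : Subfield K) {x : K} (hx : x ∈ E) : IsAlgebraic E x := by
  exact isAlgebraic_algebraMap (R := E) (A := K) ⟨x, hx⟩

theorem isIntegral_adjoinSet {E : Subfield K} {t : Set K} (ht : ∀ z ∈ t, IsAlgebraic E z) :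
    ∀ z ∈ E.adjoinSet t, IsIntegral E z := by
  intro z hz
  induction hz using Subfield.closure_induction with
  | mem x hx =>
    rcases hx with hx | hx
    · exact isIntegral_algebraMap (R := E) (A := K) (x := ⟨x, hx⟩)
    · exact (ht x hx).isIntegral
  | one => exact isIntegral_one
  | add x y hx hy ihx ihy => exact ihx.add ihy
  | neg x hx ihx => exact ihx.neg
  | inv x hx ihx => exact ihx.inv
  | mul x y hx hy ihx ihy => exact ihx.mul ihy

theorem isAlg_trans {E : Subfield K} {t : Set K} (ht : ∀ z ∈ t, IsAlgebraic E z)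
    {x : K} (hx : IsAlgebraic (E.adjoinSet t) x) : IsAlgebraic E x := by
  letI : Algebra E (E.adjoinSet t) := (Subfield.inclusion (le_adjoinSet E t)).toAlgebra
  haveI : IsScalarTower E (E.adjoinSet t) K := IsScalarTower.of_algebraMap_eq fun x => rfl
  haveI : Algebra.IsIntegral E (E.adjoinSet t) :=
    ⟨fun z => (isIntegral_algebraMap_iff (R := ↥E) (A := ↥(E.adjoinSet t)) (B := K) (fun a b h => Subtype.val_injective h)).mp
      (isIntegral_adjoinSet ht z z.2)⟩
  exact (isIntegral_trans (R := E) (A := E.adjoinSet t) x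
    (isAlgebraic_iff_isIntegral.mp hx)).isAlgebraic

theorem ratio_rep (E : Subfield K) (s : Set K) :
    ∀ z ∈ E.adjoinSet s, ∃ p q : Algebra.adjoin E s, (q : K) ≠ 0 ∧ z * q = p := by
  intro z hz
  induction hz using Subfield.closure_induction with
  | mem x hx =>
    refine ⟨⟨x, ?_⟩, 1, by simp, by simp⟩
    rcases hx with hx | hx
    · exact Subalgebra.algebraMap_mem (Algebra.adjoin E s) ⟨x, hx⟩
    · exact Algebra.subset_adjoin hx
  | one => exact ⟨1, 1, by simp, by simp⟩
  | add x y hx hy ihx ihy =>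
    obtain ⟨p1, q1, h1, e1⟩ := ihx
    obtain ⟨p2, q2, h2, e2⟩ := ihy
    refine ⟨p1 * q2 + p2 * q1, q1 * q2, by push_cast; exact mul_ne_zero h1 h2, ?_⟩
    push_cast
    linear_combination (q2 : K) * e1 + (q1 : K) * e2
  | neg x hx ihx =>
    obtain ⟨p, q, h, e⟩ := ihx
    refine ⟨-p, q, h, ?_⟩
    push_cast
    linear_combination -e
  | inv x hx ihx =>
    obtain ⟨p, q, h, e⟩ := ihx
    by_cases hx0 : x = 0
    · exact ⟨0, 1, by simp, by simp [hx0]⟩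
    · have hp : (p : K) ≠ 0 := by
        intro h0
        rw [h0] at e
        rcases mul_eq_zero.mp e with h' | h'
        · exact hx0 h'
        · exact h h'
      refine ⟨q, p, hp, ?_⟩
      field_simp
      linear_combination -e
  | mul x y hx hy ihx ihy =>
    obtain ⟨p1, q1, h1, e1⟩ := ihx
    obtain ⟨p2, q2, h2, e2⟩ := ihy
    refine ⟨p1 * p2, q1 * q2, by push_cast; exact mul_ne_zero h1 h2, ?_⟩
    push_cast
    linear_combination (y * (q2 : K)) * e1 + (p1 : K) * e2

theorem isAlg_ringAdjoin_of_isAlg_adjoinSet {E : Subfield K} {s : Set K} {x : K}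
    (hx : IsAlgebraic (E.adjoinSet s) x) : IsAlgebraic (Algebra.adjoin E s) x := by
  classical
  obtain ⟨P, hP0, hPev⟩ := hx
  have hrep : ∀ i : ℕ, ∃ p q : Algebra.adjoin E s, (q : K) ≠ 0 ∧ ((P.coeff i : K)) * q = p :=
    fun i => ratio_rep E s _ (P.coeff i).2
  choose p q hq he using hrep
  set d : Algebra.adjoin E s := ∏ i ∈ P.support, q i with hd_def
  have hd : (d : K) ≠ 0 := by
    rw [hd_def]
    push_cast
    exact Finset.prod_ne_zero_iff.mpr fun i _ => hq i
  set Q : Polynomial (Algebra.adjoin E s) :=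
    ∑ i ∈ P.support, Polynomial.C ((∏ j ∈ P.support.erase i, q j) * p i) * Polynomial.X ^ i
    with hQ_def
  have key : ∀ i ∈ P.support,
      ((((∏ j ∈ P.support.erase i, q j) * p i : Algebra.adjoin E s)) : K)
        = (d : K) * (P.coeff i : K) := by
    intro i hi
    have h2 : ((∏ j ∈ P.support.erase i, q j : Algebra.adjoin E s) : K) * (q i : K) = (d : K) := by
      have := Finset.prod_erase_mul P.support q hi
      exact_mod_cast congrArg (fun z : Algebra.adjoin E s => (z : K)) this
    push_cast
    calc ((∏ j ∈ P.support.erase i, (q j : K))) * (p i : K)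
        = (∏ j ∈ P.support.erase i, (q j : K)) * ((P.coeff i : K) * (q i : K)) := by
          rw [he i]
      _ = ((∏ j ∈ P.support.erase i, (q j : K)) * (q i : K)) * (P.coeff i : K) := by ring
      _ = (d : K) * (P.coeff i : K) := by push_cast at h2; rw [h2]
  have hQev : Polynomial.aeval x Q = (d : K) * Polynomial.aeval x P := by
    rw [hQ_def, map_sum]
    have step : ∀ i ∈ P.support,
        Polynomial.aeval x (Polynomial.C ((∏ j ∈ P.support.erase i, q j) * p i)
          * Polynomial.X ^ i) = (d : K) * ((P.coeff i : K) * x ^ i) := by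
      intro i hi
      rw [map_mul, Polynomial.aeval_C, map_pow, Polynomial.aeval_X]
      have : (algebraMap (Algebra.adjoin E s) K) ((∏ j ∈ P.support.erase i, q j) * p i)
          = (d : K) * (P.coeff i : K) := key i hi
      rw [this]; ring
    rw [Finset.sum_congr rfl step, ← Finset.mul_sum]
    congr 1
    rw [Polynomial.aeval_def, Polynomial.eval₂_eq_sum, Polynomial.sum_def]
    rfl
  have hQ0 : Q ≠ 0 := by
    intro h0
    have hi0 : P.natDegree ∈ P.support := Polynomial.natDegree_mem_support_of_nonzero hP0
    have hcoe : Q.coeff P.natDegree = (∏ j ∈ P.support.erase P.natDegree, q j) * p P.natDegree := by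
      rw [hQ_def, Polynomial.finset_sum_coeff]
      rw [Finset.sum_eq_single_of_mem P.natDegree hi0]
      · rw [Polynomial.coeff_C_mul, Polynomial.coeff_X_pow, if_pos rfl, mul_one]
      · intro b _ hb
        rw [Polynomial.coeff_C_mul, Polynomial.coeff_X_pow, if_neg (fun h => hb h.symm), mul_zero]
    have hne : Q.coeff P.natDegree ≠ 0 := by
      rw [hcoe]
      intro h
      have : ((((∏ j ∈ P.support.erase P.natDegree, q j) * p P.natDegree :
          Algebra.adjoin E s)) : K) = 0 := by rw [h]; rfl
      rw [key _ hi0] at this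
      rcases mul_eq_zero.mp this with h' | h'
      · exact hd h'
      · have : P.coeff P.natDegree = 0 := Subtype.ext h'
        exact (Polynomial.mem_support_iff.mp hi0) this
    rw [h0] at hne
    simp at hne
  exact ⟨Q, hQ0, by rw [hQev, hPev, mul_zero]⟩

theorem ringAdjoin_subset_adjoinSet (E : Subfield K) (s : Set K) :
    ∀ z : K, z ∈ Algebra.adjoin E s → z ∈ E.adjoinSet s := by
  intro z hz
  induction hz using Algebra.adjoin_induction with
  | mem w hw => exact subset_adjoinSet E s hw
  | algebraMap r => exact Subfield.subset_closure (Set.mem_union_left _ r.2)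
  | add x y _ _ ihx ihy => exact add_mem ihx ihy
  | mul x y _ _ ihx ihy => exact mul_mem ihx ihy

theorem isAlg_adjoinSet_of_isAlg_ringAdjoin {E : Subfield K} {s : Set K} {x : K}
    (hx : IsAlgebraic (Algebra.adjoin E s) x) : IsAlgebraic (E.adjoinSet s) x := by
  refine isAlgebraic_of_ringHom (K := K)
    ({ toFun := fun z => ⟨z.1, ringAdjoin_subset_adjoinSet E s z.1 z.2⟩,
       map_one' := rfl, map_mul' := fun _ _ => rfl,
       map_zero' := rfl, map_add' := fun _ _ => rfl } :
      Algebra.adjoin E s →+* E.adjoinSet s) (fun _ => rfl) ?_ hx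
  exact fun a b h => Subtype.val_injective h

theorem transcendental_adjoinSet_iff {E : Subfield K} {s : Set K} {x : K} :
    Transcendental (E.adjoinSet s) x ↔ Transcendental (Algebra.adjoin E s) x := by
  constructor
  · exact fun h halg => h (isAlg_adjoinSet_of_isAlg_ringAdjoin halg)
  · exact fun h halg => h (isAlg_ringAdjoin_of_isAlg_adjoinSet halg)

/-- Abbreviation: a finite set is algebraically independent over `F`. -/
def AI (F : Subfield K) (u : Finset K) : Prop :=
  AlgebraicIndependent F ((↑) : (↑u : Set K) → K)

theorem AI_insert_iff (F : Subfield K) {u : Finset K} {a : K} (ha : a ∉ u) :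
    AI F (insert a u) ↔ (AI F u ∧ Transcendental (F.adjoinSet ↑u) a) := by
  classical
  have ha' : a ∉ (↑u : Set K) := by simpa using ha
  have hins : ((↑(insert a u) : Set K)) = insert a (↑u : Set K) := Finset.coe_insert a u
  rw [AI, hins]
  have hiff1 : AlgebraicIndependent F ((↑) : (insert a (↑u : Set K) : Set K) → K) ↔
      AlgebraicIndependent F (fun o : Option (↑u : Set K) => o.elim a (↑)) := by
    have hcoe : ((↑) : (insert a (↑u : Set K) : Set K) → K) =
        (fun o : Option (↑u : Set K) => o.elim a (↑)) ∘ (Set.subtypeInsertEquivOption ha') := by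
      funext x
      by_cases h : (x : K) = a <;> simp [Set.subtypeInsertEquivOption, h]
    rw [hcoe]
    exact algebraicIndependent_equiv (Set.subtypeInsertEquivOption ha')
  rw [hiff1]
  constructor
  · intro h
    have hu : AI F u := h.comp some (Option.some_injective _)
    refine ⟨hu, ?_⟩
    rw [transcendental_adjoinSet_iff]
    have := (hu.option_iff_transcendental a).mp h
    rwa [Subtype.range_coe] at this
  · rintro ⟨hu, ht⟩
    rw [transcendental_adjoinSet_iff] at ht
    have := (hu.option_iff_transcendental a).mpr (by rwa [Subtype.range_coe])
    exact this

theorem AI_empty (F : Subfield K) : AI F (∅ : Finset K) := by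
  have : IsEmpty ((↑(∅ : Finset K) : Set K)) := by simp
  exact algebraicIndependent_empty_type

theorem AI_singleton_iff (F : Subfield K) (a : K) :
    AI F {a} ↔ Transcendental F a := by
  have := AI_insert_iff F (u := ∅) (a := a) (by simp)
  simp only [Finset.insert_empty] at this
  rw [this, Finset.coe_empty, adjoinSet_empty]
  exact ⟨fun h => h.2, fun h => ⟨AI_empty F, h⟩⟩

theorem AI_mono (F : Subfield K) {u v : Finset K} (h : u ⊆ v) (hv : AI F v) : AI F u :=
  hv.mono (by exact_mod_cast h)

theorem exchange_pair (E : Subfield K) {a b : K} (ha : Transcendental E a)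
    (hab : IsAlgebraic (E.adjoinSet {b}) a) : IsAlgebraic (E.adjoinSet {a}) b := by
  by_cases hba : a = b
  · subst hba
    exact isAlg_self _ (subset_adjoinSet E {a} rfl)
  by_contra hb
  have htb : Transcendental (E.adjoinSet ↑({a} : Finset K)) b := by
    rw [Finset.coe_singleton]; exact hb
  have h1 : AI E {a} := (AI_singleton_iff E a).mpr ha
  have h2 : AI E (insert b {a}) :=
    (AI_insert_iff E (by simp [Ne.symm hba])).mpr ⟨h1, htb⟩
  have h3 : AI E (insert a {b}) := by
    have : ({b, a} : Finset K) = {a, b} := Finset.pair_comm b a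
    rw [AI] at h2 ⊢
    rw [this] at h2
    exact h2
  have h4 := (AI_insert_iff E (show a ∉ ({b} : Finset K) by simp [hba])).mp h3
  refine h4.2 ?_
  rw [Finset.coe_singleton]
  exact hab

theorem steinitz (F : Subfield K) : ∀ (N : ℕ) (u v : Finset K), (u \ v).card ≤ N →
    AI F u → (∀ z ∈ u, IsAlgebraic (F.adjoinSet ↑v) z) → u.card ≤ v.card := by
  intro N
  induction N with
  | zero =>
    intro u v hc hu hv
    have : u ⊆ v := by
      rw [← Finset.sdiff_eq_empty_iff_subset]
      exact Finset.card_eq_zero.mp (le_antisymm hc (Nat.zero_le _))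
    exact Finset.card_le_card this
  | succ N ih =>
    intro u v hc hu hv
    by_cases hsub : u ⊆ v
    · exact Finset.card_le_card hsub
    obtain ⟨a, hau, hav⟩ := Finset.not_subset.mp hsub
    have hta : Transcendental (F.adjoinSet ↑(u.erase a)) a := by
      have := (AI_insert_iff F (Finset.notMem_erase a u)).mp
        (by rwa [Finset.insert_erase hau])
      exact this.2
    set P : Finset (Finset K) :=
      (v \ u).powerset.filter (fun w => IsAlgebraic (F.adjoinSet ↑((v ∩ u) ∪ w)) a) with hP
    have hPne : (v \ u) ∈ P := by
      rw [hP, Finset.mem_filter]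
      refine ⟨Finset.mem_powerset_self _, ?_⟩
      rw [show v ∩ u ∪ v \ u = v by ext z; simp; tauto]
      exact hv a hau
    obtain ⟨w, hwP, hwmin⟩ := P.exists_min_image Finset.card ⟨_, hPne⟩
    rw [hP, Finset.mem_filter, Finset.mem_powerset] at hwP
    obtain ⟨hwsub, hwalg⟩ := hwP
    have hwne : w.Nonempty := by
      rcases Finset.eq_empty_or_nonempty w with h | h
    -- empty case: contradiction
      · exfalso
        apply hta
        apply isAlg_mono (adjoinSet_mono_set F ?_)
        · rw [h, Finset.union_empty] at hwalg
          exact hwalg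
        · intro z hz
          simp only [Finset.coe_inter, Set.mem_inter_iff] at hz
          simp only [Finset.coe_erase, Set.mem_diff, Set.mem_singleton_iff]
          refine ⟨hz.2, ?_⟩
          intro hza
          rw [hza] at hz
          exact hav (by exact_mod_cast hz.1)
      · exact h
    obtain ⟨b, hbw⟩ := hwne
    have hbvu : b ∈ v \ u := hwsub hbw
    have hbv : b ∈ v := (Finset.mem_sdiff.mp hbvu).1
    have hbu : b ∉ u := (Finset.mem_sdiff.mp hbvu).2
    set E := F.adjoinSet ↑((v ∩ u) ∪ w.erase b) with hE
    have htaE : Transcendental E a := by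
      intro halg
      have hmem : w.erase b ∈ P := by
        rw [hP, Finset.mem_filter, Finset.mem_powerset]
        exact ⟨(Finset.erase_subset _ _).trans hwsub, halg⟩
      have h1 := hwmin _ hmem
      have h2 : (w.erase b).card < w.card := Finset.card_erase_lt_of_mem hbw
      omega
    have habE : IsAlgebraic (E.adjoinSet {b}) a := by
      have heq : E.adjoinSet {b} = F.adjoinSet ↑((v ∩ u) ∪ w) := by
        rw [hE, adjoinSet_adjoinSet]
        apply adjoinSet_congr
        rw [← Finset.coe_singleton, ← Finset.coe_union]
        apply congrArg
        rw [Finset.union_assoc]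
        apply congrArg
        rw [Finset.union_comm, ← Finset.insert_eq, Finset.insert_erase hbw]
      rw [heq]
      exact hwalg
    have hbaE := exchange_pair E htaE habE
    set v' : Finset K := insert a (v.erase b) with hv'
    have hEa : E.adjoinSet {a} ≤ F.adjoinSet ↑v' := by
      rw [hE, adjoinSet_adjoinSet]
      apply adjoinSet_mono_set
      intro z hz
      simp only [Set.mem_union, Finset.coe_union, Finset.coe_inter, Finset.coe_erase,
        Set.mem_inter_iff, Set.mem_diff, Set.mem_singleton_iff, hv', Finset.coe_insert,
        Set.mem_insert_iff] at hz ⊢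
      rcases hz with (⟨hz1, hz2⟩ | ⟨hz1, hz2⟩) | hz
      · refine Or.inr ⟨hz1, ?_⟩
        intro hzb; rw [hzb] at hz2; exact hbu hz2
      · have : z ∈ v \ u := hwsub hz1
        refine Or.inr ⟨(Finset.mem_sdiff.mp this).1, hz2⟩
      · exact Or.inl hz
    have hbv' : IsAlgebraic (F.adjoinSet ↑v') b := isAlg_mono hEa hbaE
    have hvv' : ∀ z ∈ (↑v : Set K), IsAlgebraic (F.adjoinSet ↑v') z := by
      intro z hzv
      by_cases hzb : z = b
      · rw [hzb]; exact hbv'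
      · refine isAlg_self _ (subset_adjoinSet _ _ ?_)
        simp only [hv', Finset.coe_insert, Set.mem_insert_iff, Finset.coe_erase, Set.mem_diff,
          Set.mem_singleton_iff]
        exact Or.inr ⟨by exact_mod_cast hzv, hzb⟩
    have hv'span : ∀ z ∈ u, IsAlgebraic (F.adjoinSet ↑v') z := by
      intro z hzu
      have h1 : IsAlgebraic ((F.adjoinSet ↑v').adjoinSet ↑v) z :=
        isAlg_mono (by
          have h2 : F.adjoinSet ↑v ≤ (F.adjoinSet ↑v').adjoinSet ↑v :=
            adjoinSet_mono_base (le_adjoinSet F ↑v') ↑v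
          exact h2) (hv z hzu)
      exact isAlg_trans hvv' h1
    have hmeas : (u \ v').card ≤ N := by
      have hsubset : u \ v' ⊆ (u \ v).erase a := by
        intro z hz
        rw [Finset.mem_sdiff] at hz
        obtain ⟨hzu, hzv'⟩ := hz
        rw [Finset.mem_erase, Finset.mem_sdiff]
        simp only [hv', Finset.mem_insert, Finset.mem_erase, not_or, not_and] at hzv'
        obtain ⟨hza, hz2⟩ := hzv'
        refine ⟨hza, hzu, ?_⟩
        intro hzv
        rcases (by tauto : z = b ∨ z ∉ v) with h | h
        · rw [h] at hzu; exact hbu hzu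
        · exact h hzv
      have h1 := Finset.card_le_card hsubset
      have h2 : a ∈ u \ v := Finset.mem_sdiff.mpr ⟨hau, hav⟩
      have h3 := Finset.card_erase_of_mem h2
      omega
    have hv'card : v'.card = v.card := by
      rw [hv', Finset.card_insert_of_notMem (by
        rw [Finset.mem_erase]; intro h; exact hav h.2)]
      have h1 := Finset.card_erase_of_mem hbv
      have h2 : 1 ≤ v.card := Finset.card_pos.mpr ⟨b, hbv⟩
      omega
    calc u.card ≤ v'.card := ih u v' hmeas hu hv'span
      _ = v.card := hv'card

theorem trdegOver_le_trdegOver (F : Subfield K) {s t : Set K} (hs : s.Finite) (ht : t.Finite)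
    (h : ∀ x ∈ s, IsAlgebraic (F.adjoinSet t) x) : trdegOver F s ≤ trdegOver F t := by
  refine ciSup_le' ?_
  rintro ⟨u, hus, huAI⟩
  have huf : u.Finite := hs.subset hus
  set uf : Finset K := huf.toFinset with huf_def
  have hufc : (↑uf : Set K) = u := huf.coe_toFinset
  have huAI' : AI F uf := by rw [AI, hufc]; exact huAI
  set tf : Finset K := ht.toFinset with htf_def
  set Q : Finset (Finset K) := tf.powerset.filter (fun w => AI F w) with hQ
  have hQne : (∅ : Finset K) ∈ Q := by
    rw [hQ, Finset.mem_filter, Finset.mem_powerset]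
    exact ⟨Finset.empty_subset _, AI_empty F⟩
  obtain ⟨v, hvQ, hvmax⟩ := Q.exists_max_image Finset.card ⟨_, hQne⟩
  rw [hQ, Finset.mem_filter, Finset.mem_powerset] at hvQ
  obtain ⟨hvsub, hvAI⟩ := hvQ
  have hvt : (↑v : Set K) ⊆ t := by
    intro z hz
    have : z ∈ tf := hvsub (by exact_mod_cast hz)
    rwa [htf_def, Set.Finite.mem_toFinset] at this
  have htv : ∀ z ∈ t, IsAlgebraic (F.adjoinSet ↑v) z := by
    intro z hz
    by_cases hzv : z ∈ v
    · exact isAlg_self _ (subset_adjoinSet _ _ (by exact_mod_cast hzv))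
    · by_contra htr
      have hAIins : AI F (insert z v) := (AI_insert_iff F hzv).mpr ⟨hvAI, htr⟩
      have hins : insert z v ∈ Q := by
        rw [hQ, Finset.mem_filter, Finset.mem_powerset]
        exact ⟨Finset.insert_subset (ht.mem_toFinset.mpr hz) hvsub, hAIins⟩
      have h1 := hvmax _ hins
      rw [Finset.card_insert_of_notMem hzv] at h1
      omega
  have hsv : ∀ z ∈ uf, IsAlgebraic (F.adjoinSet ↑v) z := by
    intro z hz
    have hzs : z ∈ s := hus (by rw [← hufc]; exact_mod_cast hz)
    have h1 : IsAlgebraic ((F.adjoinSet ↑v).adjoinSet t) z :=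
      isAlg_mono (adjoinSet_mono_base (le_adjoinSet F ↑v) t) (h z hzs)
    exact isAlg_trans htv h1
  have hcard := steinitz F ((uf \ v).card) uf v le_rfl huAI' hsv
  have h1 : Cardinal.mk u = (uf.card : Cardinal) := by
    rw [← hufc]; exact Cardinal.mk_coe_finset
  have h3 : Cardinal.mk (↑(↑v : Set K)) ≤ trdegOver F t :=
    le_ciSup (Cardinal.bddAbove_range _)
      (⟨(↑v : Set K), hvt, hvAI⟩ :
        {w : Set K // w ⊆ t ∧ AlgebraicIndependent F ((↑) : w → K)})
  calc Cardinal.mk u = (uf.card : Cardinal) := h1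
    _ ≤ (v.card : Cardinal) := by exact_mod_cast hcard
    _ = Cardinal.mk (↑(↑v : Set K)) := Cardinal.mk_coe_finset.symm
    _ ≤ trdegOver F t := h3

theorem rank_mul_diagonal {k n : ℕ} (M : Matrix (Fin k) (Fin n) ℤ) (c : Fin n → ℤ)
    (hc : ∀ i, c i ≠ 0) (h : M.rank = k) : (M * Matrix.diagonal c).rank = k := by
  classical
  apply le_antisymm
  · have h1 := Matrix.rank_mul_le_left M (Matrix.diagonal c)
    rw [h] at h1
    exact h1
  · suffices key : M.rank ≤ (M * Matrix.diagonal c).rank by omega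
    rw [Matrix.rank, Matrix.rank]
    set L : ℤ := ∏ i, c i with hL
    have hL0 : L ≠ 0 := Finset.prod_ne_zero_iff.mpr fun i _ => hc i
    haveI : Module.Finite ℤ (LinearMap.range (M * Matrix.diagonal c).mulVecLin) := by
      infer_instance
    refine LinearMap.finrank_le_of_isSMulRegular (S := ℤ) (s := L) _ _ ?_ ?_
    · intro x y hxy
      funext j
      have := congrFun hxy j
      simp only [Pi.smul_apply, smul_eq_mul] at this
      exact mul_left_cancel₀ hL0 this
    · rintro x ⟨w, rfl⟩
      refine ⟨fun i => (∏ j ∈ Finset.univ.erase i, c j) * w i, ?_⟩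
      rw [Matrix.mulVecLin_apply, Matrix.mulVecLin_apply, ← Matrix.mulVec_mulVec]
      have hv : (Matrix.diagonal c).mulVec (fun i => (∏ j ∈ Finset.univ.erase i, c j) * w i)
          = L • w := by
        funext i
        rw [Matrix.mulVec_diagonal]
        have : c i * ∏ j ∈ Finset.univ.erase i, c j = L := Finset.mul_prod_erase _ _ (Finset.mem_univ i)
        simp only [Pi.smul_apply, smul_eq_mul]
        rw [← mul_assoc, this]
      rw [hv, Matrix.mulVec_smul]

theorem isAlg_zpow {F : Subfield K} {x : K} (hx : IsAlgebraic F x) (hx0 : x ≠ 0) (z : ℤ) :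
    IsAlgebraic F (x ^ z) := by
  rw [isAlgebraic_iff_isIntegral] at hx ⊢
  rcases z with p | p
  · rw [Int.ofNat_eq_coe, zpow_natCast]
    exact hx.pow p
  · rw [zpow_negSucc]
    exact (hx.pow (p + 1)).inv

theorem isAlg_prod {F : Subfield K} {ι : Type*} (s : Finset ι) (f : ι → K)
    (hf : ∀ i ∈ s, IsAlgebraic F (f i)) : IsAlgebraic F (∏ i ∈ s, f i) := by
  rw [isAlgebraic_iff_isIntegral]
  refine Finset.prod_induction f _ (fun a b ha hb => ha.mul hb) isIntegral_one ?_
  exact fun i hi => isAlgebraic_iff_isIntegral.mp (hf i hi)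

end Rot

/-- Rotundity is preserved under coordinatewise extraction of roots and translation by
algebraic elements: if `(b′ᵢ)^{mᵢ}·dᵢ = bᵢ` with `mᵢ ≥ 1` and each `dᵢ` algebraic over `F`,
and for every `k×n` integer matrix `M` of rank `k` one has `2·trdeg(b^M/F) ≥ k`, then the
same holds with `b` replaced by `b′`. -/
theorem rotund_of_roots_and_algebraic_translates {K : Type*} [Field K] [IsAlgClosed K]
    [CharZero K] (F : Subfield K) (n : ℕ) (hn : 1 ≤ n)
    (b b' : Fin n → Kˣ) (m : Fin n → ℕ) (hm : ∀ i, 1 ≤ m i) (d : Fin n → Kˣ)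
    (hd : ∀ i, IsAlgebraic F ((d i : Kˣ) : K))
    (heq : ∀ i, b' i ^ m i * d i = b i)
    (hrot : ∀ k : ℕ, 1 ≤ k → k ≤ n → ∀ M : Matrix (Fin k) (Fin n) ℤ, M.rank = k →
      (k : Cardinal) ≤
        2 * trdegOver F (Set.range fun j => ((∏ i, b i ^ M j i : Kˣ) : K))) :
    ∀ k : ℕ, 1 ≤ k → k ≤ n → ∀ M : Matrix (Fin k) (Fin n) ℤ, M.rank = k →
      (k : Cardinal) ≤
        2 * trdegOver F (Set.range fun j => ((∏ i, b' i ^ M j i : Kˣ) : K)) := by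
  classical
  intro k hk1 hkn M hMrank
  set c : Fin n → ℤ := fun i => ∏ j ∈ Finset.univ.erase i, (m j : ℤ) with hc_def
  set L : ℤ := ∏ j, (m j : ℤ) with hL_def
  have hc0 : ∀ i, c i ≠ 0 := fun i => Finset.prod_ne_zero_iff.mpr
    (fun j _ => Int.natCast_ne_zero.mpr (Nat.one_le_iff_ne_zero.mp (hm j)))
  have hcm : ∀ i, (m i : ℤ) * c i = L := by
    intro i
    show (m i : ℤ) * ∏ j ∈ Finset.univ.erase i, (m j : ℤ) = ∏ j, (m j : ℤ)
    exact Finset.mul_prod_erase Finset.univ (fun j => (m j : ℤ)) (Finset.mem_univ i)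
  set M' : Matrix (Fin k) (Fin n) ℤ := M * Matrix.diagonal c with hM'_def
  have hM'app : ∀ j i, M' j i = M j i * c i := by
    intro j i
    rw [hM'_def, Matrix.mul_diagonal]
  have hrank' : M'.rank = k := Rot.rank_mul_diagonal M c hc0 hMrank
  have h1 := hrot k hk1 hkn M' hrank'
  set y : Fin k → K := fun j => ((∏ i, b' i ^ M j i : Kˣ) : K) with hy_def
  set e : Fin k → Kˣ := fun j => ∏ i, d i ^ (M j i * c i) with he_def
  have key : ∀ j, (∏ i, b i ^ M' j i : Kˣ) = (∏ i, b' i ^ M j i) ^ L * e j := by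
    intro j
    have step : ∀ i, b i ^ M' j i = (b' i ^ M j i) ^ L * d i ^ (M j i * c i) := by
      intro i
      rw [← heq i, hM'app j i]
      rw [mul_zpow]
      congr 1
      · rw [← zpow_natCast (b' i) (m i), ← zpow_mul, ← zpow_mul]
        congr 1
        rw [← hcm i]
        ring
    rw [Finset.prod_congr rfl (fun i _ => step i), Finset.prod_mul_distrib]
    congr 1
    rw [← Finset.prod_zpow]
  have he_alg : ∀ j, IsAlgebraic F ((e j : Kˣ) : K) := by
    intro j
    rw [he_def]
    have : ((∏ i, d i ^ (M j i * c i) : Kˣ) : K) = ∏ i, ((d i : K)) ^ (M j i * c i) := by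
      rw [← Units.coeHom_apply, map_prod]
      simp [Units.val_zpow_eq_zpow_val]
    rw [this]
    exact Rot.isAlg_prod _ _ (fun i _ => Rot.isAlg_zpow (hd i) (Units.ne_zero (d i)) _)
  have halg : ∀ x ∈ Set.range (fun j => ((∏ i, b i ^ M' j i : Kˣ) : K)),
      IsAlgebraic (F.adjoinSet (Set.range y)) x := by
    rintro x ⟨j, rfl⟩
    show IsAlgebraic (F.adjoinSet (Set.range y)) ((∏ i, b i ^ M' j i : Kˣ) : K)
    rw [key j]
    rw [Units.val_mul, Units.val_zpow_eq_zpow_val]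
    have hy_mem : (y j) ^ L ∈ F.adjoinSet (Set.range y) :=
      Subfield.zpow_mem _ (Rot.subset_adjoinSet F (Set.range y) (Set.mem_range_self j)) L
    have h2 : IsAlgebraic (F.adjoinSet (Set.range y)) ((y j) ^ L) := Rot.isAlg_self _ hy_mem
    have h3 : IsAlgebraic (F.adjoinSet (Set.range y)) ((e j : Kˣ) : K) :=
      Rot.isAlg_mono (Rot.le_adjoinSet F _) (he_alg j)
    rw [isAlgebraic_iff_isIntegral] at h2 h3 ⊢
    exact h2.mul h3
  have h4 : trdegOver F (Set.range fun j => ((∏ i, b i ^ M' j i : Kˣ) : K))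
      ≤ trdegOver F (Set.range y) :=
    Rot.trdegOver_le_trdegOver F (Set.finite_range _) (Set.finite_range _) halg
  exact h1.trans (mul_le_mul_right h4 2)

end
end

section
/- Let D be a torsion-free abelian group, D₀ a divisible subgroup of D, and H a subgroup of D. Let e ∈ H ∩ D₀ and suppose that for every integer m ≥ 2 the quotient H/mH is cyclic of order m generated by the class of e. Then for every integer m ≥ 2 the quotient (H ∩ D₀)/m(H ∩ D₀) is cyclic of order m generated by the class of e. (The intersection of a ℤ-group with a divisible subgroup of a torsion-free ambient group containing its distinguished generator is again a ℤ-group.) -/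
noncomputable section

/-- The subgroup `m·A = {m • a : a ∈ A}` of an abelian group `A`. -/
def smulSubgroup (m : ℕ) (A : Type*) [AddCommGroup A] : AddSubgroup A :=
  AddMonoidHom.range (AddMonoidHom.mk' (fun a : A => m • a) (fun a b => smul_add m a b))

/-- The intersection of a ℤ-group with a divisible subgroup of a torsion-free ambient group
containing its distinguished generator is again a ℤ-group: if `D` is torsion-free abelian,
`D₀ ≤ D` is divisible, `H ≤ D`, `e ∈ H ∩ D₀`, and for every `m ≥ 2` the quotient `H/mH` is
cyclic of order `m` generated by the class of `e`, then for every `m ≥ 2` the quotient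
`(H ∩ D₀)/m(H ∩ D₀)` is cyclic of order `m` generated by the class of `e`. -/
theorem zgroup_inter_divisible (D : Type*) [AddCommGroup D]
    (hDtf : ∀ (x : D) (n : ℕ), 0 < n → n • x = 0 → x = 0)
    (D₀ H : AddSubgroup D)
    (hdiv : ∀ d ∈ D₀, ∀ m : ℕ, 1 ≤ m → ∃ d' ∈ D₀, m • d' = d)
    (e : D) (he : e ∈ H ⊓ D₀)
    (hH : ∀ m : ℕ, 2 ≤ m →
      Nat.card (H ⧸ smulSubgroup m H) = m ∧
      ∀ q : H ⧸ smulSubgroup m H, ∃ k : ℤ,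
        k • (QuotientAddGroup.mk (⟨e, (AddSubgroup.mem_inf.mp he).1⟩ : H)) = q) :
    ∀ m : ℕ, 2 ≤ m →
      Nat.card ((H ⊓ D₀ : AddSubgroup D) ⧸ smulSubgroup m (H ⊓ D₀ : AddSubgroup D)) = m ∧
      ∀ q : (H ⊓ D₀ : AddSubgroup D) ⧸ smulSubgroup m (H ⊓ D₀ : AddSubgroup D), ∃ k : ℤ,
        k • (QuotientAddGroup.mk (⟨e, he⟩ : (H ⊓ D₀ : AddSubgroup D))) = q := by
  intro m hm
  obtain ⟨hcard, hgen⟩ := hH m hm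
  set K : AddSubgroup D := H ⊓ D₀ with hKdef
  have hKH : K ≤ H := inf_le_left
  have hmpos : 0 < m := by omega
  set eK : K := ⟨e, he⟩ with heK
  set eH : H := ⟨e, (AddSubgroup.mem_inf.mp he).1⟩ with heH
  set gK : K ⧸ smulSubgroup m K := QuotientAddGroup.mk eK with hgK
  set gH : H ⧸ smulSubgroup m H := QuotientAddGroup.mk eH with hgH
  -- the induced hom K/mK → H/mH
  have hle : smulSubgroup m K ≤ (smulSubgroup m H).comap (AddSubgroup.inclusion hKH) := by
    intro x hx
    obtain ⟨a, ha⟩ := hx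
    refine ⟨AddSubgroup.inclusion hKH a, ?_⟩
    simp only [AddMonoidHom.mk'_apply] at ha ⊢
    apply Subtype.ext
    have h1 : m • (a : D) = (x : D) := congrArg Subtype.val ha
    simpa using h1
  set φ : (K ⧸ smulSubgroup m K) →+ (H ⧸ smulSubgroup m H) :=
    QuotientAddGroup.map _ _ (AddSubgroup.inclusion hKH) hle with hφ
  have hφg : φ gK = gH := by
    rw [hgK, hφ, QuotientAddGroup.map_mk]
    rfl
  -- surjectivity of zmultiples of gK
  have hsurj : ∀ q : K ⧸ smulSubgroup m K, ∃ k : ℤ, k • gK = q := by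
    intro q
    induction q using QuotientAddGroup.induction_on with
    | H x =>
      obtain ⟨k, hk⟩ := hgen (QuotientAddGroup.mk ⟨(x : D), x.2.1⟩)
      rw [← QuotientAddGroup.mk_zsmul, QuotientAddGroup.eq_iff_sub_mem] at hk
      obtain ⟨h, hh⟩ := hk
      simp only [AddMonoidHom.mk'_apply] at hh
      have hD : m • (h : D) = k • e - (x : D) := by
        have h1 := congrArg Subtype.val hh
        simpa using h1
      have hxkeD₀ : (x : D) - k • e ∈ D₀ := sub_mem (show (x:D) ∈ D₀ from x.2.2) (zsmul_mem (show e ∈ D₀ from (AddSubgroup.mem_inf.mp ‹e ∈ H ⊓ D₀›).2) k)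
      obtain ⟨d', hd', hd'eq⟩ := hdiv _ hxkeD₀ m (by omega)
      have hneg : m • (-(h : D)) = (x : D) - k • e := by
        rw [smul_neg, hD]; abel
      have hdh : d' = -(h : D) := by
        have h0 : m • (d' - (-(h : D))) = 0 := by
          rw [smul_sub, hd'eq, hneg, sub_self]
        exact sub_eq_zero.mp (hDtf _ m hmpos h0)
      have hhD₀ : (h : D) ∈ D₀ := by
        have : -(h : D) ∈ D₀ := hdh ▸ hd'
        simpa using neg_mem this
      -- so h lies in K and witnesses k • eK - x ∈ m K
      refine ⟨k, ?_⟩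
      rw [hgK, ← QuotientAddGroup.mk_zsmul, QuotientAddGroup.eq_iff_sub_mem]
      refine ⟨⟨(h : D), AddSubgroup.mem_inf.mpr ⟨h.2, hhD₀⟩⟩, ?_⟩
      simp only [AddMonoidHom.mk'_apply]
      apply Subtype.ext
      show m • (h : D) = ((k • eK - x : K) : D)
      rw [hD]
      rfl
  -- order of gH is m
  have hzH : AddSubgroup.zmultiples gH = ⊤ := by
    rw [AddSubgroup.eq_top_iff']
    intro q
    obtain ⟨k, hk⟩ := hgen q
    exact ⟨k, hk⟩
  have hordH : addOrderOf gH = m := by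
    have h1 : Nat.card (AddSubgroup.zmultiples gH) = addOrderOf gH :=
      Nat.card_zmultiples gH
    rw [hzH] at h1
    have h2 : Nat.card (⊤ : AddSubgroup (H ⧸ smulSubgroup m H)) =
        Nat.card (H ⧸ smulSubgroup m H) := Nat.card_congr AddSubgroup.topEquiv.toEquiv
    rw [h2, hcard] at h1
    omega
  -- order of gK is m
  have hmgK : m • gK = 0 := by
    rw [hgK, ← QuotientAddGroup.mk_nsmul, QuotientAddGroup.eq_zero_iff]
    exact ⟨eK, rfl⟩
  have hordK : addOrderOf gK = m := by
    have hdvd1 : addOrderOf gK ∣ m := addOrderOf_dvd_of_nsmul_eq_zero hmgK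
    have hdvd2 : m ∣ addOrderOf gK := by
      have h3 := addOrderOf_map_dvd φ gK
      rw [hφg, hordH] at h3
      exact h3
    exact Nat.dvd_antisymm hdvd1 hdvd2
  have hzK : AddSubgroup.zmultiples gK = ⊤ := by
    rw [AddSubgroup.eq_top_iff']
    intro q
    obtain ⟨k, hk⟩ := hsurj q
    exact ⟨k, hk⟩
  refine ⟨?_, hsurj⟩
  have h1 : Nat.card (AddSubgroup.zmultiples gK) = addOrderOf gK :=
    Nat.card_zmultiples gK
  rw [hzK, hordK] at h1
  have h2 : Nat.card (⊤ : AddSubgroup (K ⧸ smulSubgroup m K)) =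
      Nat.card (K ⧸ smulSubgroup m K) := Nat.card_congr AddSubgroup.topEquiv.toEquiv
  rw [h2] at h1
  exact h1

end
end
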